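/- arXiv:1809.09890 — 11 statements merged into one kernel-verified Lean document; each statement's English description precedes it below -/
import Mathlib

section
/- Let k ≥ 1 be a natural number and t a nonnegative integer. If k is odd and t ≤ (k+3)/8, then 2^{-k} · Σ_{j=0}^{⌊k/2⌋ - t} C(k,j) ≥ (1/(2 + 4/√π)) · exp(-16·(log 2)·t²/k). If k is even and t ≤ (k+6)/8, then 2^{-k} · Σ_{j=0}^{⌊k/2⌋ - t} C(k,j) ≥ (1/(2 + 4/√π)) · exp(-16·(log 2)·(t - 1/2)²/k). -/
open Real Filter


lemma cubic_le_exp {y : ℝ} (hy : 0 ≤ y) : 1 + y + y^2/2 + y^3/6 ≤ Real.exp y := by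
  have h := Real.sum_le_exp_of_nonneg hy 4
  simp [Finset.sum_range_succ, Nat.factorial] at h
  linarith

lemma aux_exp_ratio {x : ℝ} (h0 : 0 ≤ x) (h1 : x ≤ 1/2) :
    Real.exp (-(4*Real.log 2)*x) ≤ (1-x)/(1+x) := by
  have hl2 : (0.6931471803 : ℝ) < Real.log 2 := Real.log_two_gt_d9
  have hl2' : Real.log 2 < 0.6931471808 := Real.log_two_lt_d9
  have hx1 : (0:ℝ) < 1 + x := by linarith
  have hx2 : (0:ℝ) < 1 - x := by linarith
  have key : 1 + x ≤ (1-x) * Real.exp ((4*Real.log 2)*x) := by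
    have hy : (0:ℝ) ≤ 4*Real.log 2*x := by positivity
    have hc := cubic_le_exp hy
    have h2 := mul_le_mul_of_nonneg_left hc hx2.le
    refine le_trans ?_ h2
    have e1 : 0 ≤ x*(1/2-x) := by nlinarith
    have e2 : 0 ≤ x^2*(1/2-x) := by nlinarith
    have e3 : 0 ≤ x^3*(1/2-x) := by nlinarith
    have hl0 : (0:ℝ) ≤ Real.log 2 := by linarith
    nlinarith [sq_nonneg x, mul_nonneg (mul_nonneg h0 h0) h0, e1, e2, e3,
      mul_nonneg h0 hl0, mul_nonneg (mul_nonneg h0 h0) hl0,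
      mul_nonneg e1 hl0, mul_nonneg e2 hl0, mul_nonneg e3 hl0,
      mul_nonneg (mul_nonneg e1 hl0) hl0, mul_nonneg (mul_nonneg e2 hl0) hl0,
      mul_nonneg (mul_nonneg e3 hl0) hl0,
      mul_nonneg (mul_nonneg (mul_nonneg e3 hl0) hl0) hl0]
  rw [le_div_iff₀ hx1]
  calc Real.exp (-(4*Real.log 2)*x) * (1+x)
      ≤ Real.exp (-(4*Real.log 2)*x) * ((1-x) * Real.exp ((4*Real.log 2)*x)) :=
        mul_le_mul_of_nonneg_left key (Real.exp_pos _).le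
    _ = (1-x) * Real.exp (-(4*Real.log 2)*x + (4*Real.log 2)*x) := by
        rw [Real.exp_add]; ring
    _ = 1 - x := by simp

noncomputable def cbf (n : ℕ) : ℝ := (Nat.centralBinom n : ℝ) * Real.sqrt n / 4^n

lemma cbf_mono : Monotone cbf := by
  apply monotone_nat_of_le_succ
  intro n
  rcases Nat.eq_zero_or_pos n with rfl | hn
  · simp [cbf]; positivity
  · unfold cbf
    have hrec : ((n:ℝ)+1) * (Nat.centralBinom (n+1) : ℝ) = 2*(2*n+1) * Nat.centralBinom n := by
      exact_mod_cast congrArg (Nat.cast (R := ℝ)) (Nat.succ_mul_centralBinom_succ n)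
    have hcb : (0:ℝ) < Nat.centralBinom n := by
      exact_mod_cast Nat.centralBinom_pos n
    have hs : 4*((n:ℝ)+1)*Real.sqrt n ≤ 2*(2*(n:ℝ)+1)*Real.sqrt ((n:ℝ)+1) := by
      have h1 : (4*((n:ℝ)+1)*Real.sqrt n)^2 ≤ (2*(2*(n:ℝ)+1)*Real.sqrt ((n:ℝ)+1))^2 := by
        rw [mul_pow, mul_pow, mul_pow, mul_pow, Real.sq_sqrt (by positivity),
          Real.sq_sqrt (by positivity)]
        nlinarith [Nat.cast_nonneg (α := ℝ) n]
      exact (pow_le_pow_iff_left₀ (by positivity) (by positivity) (by norm_num)).mp h1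
    rw [div_le_div_iff₀ (by positivity) (by positivity), pow_succ]
    push_cast
    have h4 : (0:ℝ) < 4^n := by positivity
    have key : ((n:ℝ)+1) * ((Nat.centralBinom n : ℝ) * Real.sqrt n * (4^n*4)) ≤
        ((n:ℝ)+1) * ((Nat.centralBinom (n+1) : ℝ) * Real.sqrt ((n:ℝ)+1) * 4^n) := by
      have h5 := mul_le_mul_of_nonneg_right hs (mul_nonneg hcb.le h4.le)
      calc ((n:ℝ)+1) * ((Nat.centralBinom n : ℝ) * Real.sqrt n * (4^n*4))
          = (4*((n:ℝ)+1)*Real.sqrt n)*((Nat.centralBinom n : ℝ)*4^n) := by ring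
        _ ≤ (2*(2*(n:ℝ)+1)*Real.sqrt ((n:ℝ)+1))*((Nat.centralBinom n : ℝ)*4^n) := h5
        _ = (2*(2*(n:ℝ)+1)*(Nat.centralBinom n : ℝ))*(Real.sqrt ((n:ℝ)+1)*4^n) := by ring
        _ = (((n:ℝ)+1) * (Nat.centralBinom (n+1) : ℝ))*(Real.sqrt ((n:ℝ)+1)*4^n) := by
            rw [← hrec]
        _ = ((n:ℝ)+1) * ((Nat.centralBinom (n+1) : ℝ) * Real.sqrt ((n:ℝ)+1) * 4^n) := by ring
    exact le_of_mul_le_mul_left key (by positivity)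

lemma cbf_eq_stirling (n : ℕ) (hn : 1 ≤ n) :
    cbf n = Stirling.stirlingSeq (2*n) / (Stirling.stirlingSeq n)^2 := by
  have hn' : (0:ℝ) < n := by exact_mod_cast hn
  have hfact : (((2*n).factorial : ℕ) : ℝ) = (Nat.centralBinom n : ℝ) * ((n.factorial:ℝ))^2 := by
    have h1 := Nat.choose_mul_factorial_mul_factorial (show n ≤ 2*n by omega)
    have h2 : 2*n - n = n := by omega
    rw [h2] at h1
    rw [Nat.centralBinom]
    push_cast [← h1]
    ring
  unfold cbf Stirling.stirlingSeq
  rw [hfact]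
  push_cast
  have hs4 : Real.sqrt (2*(2*(n:ℝ))) = 2 * Real.sqrt n := by
    rw [show 2*(2*(n:ℝ)) = 4*n by ring, show (4:ℝ)*n = 2^2*n by norm_num,
      Real.sqrt_mul (by positivity), Real.sqrt_sq (by norm_num)]
  have hpow : (2*(n:ℝ)/Real.exp 1)^(2*n) = 4^n * (((n:ℝ)/Real.exp 1)^n)^2 := by
    rw [show 2*(n:ℝ)/Real.exp 1 = 2*((n:ℝ)/Real.exp 1) by ring, mul_pow, ← pow_mul,
      pow_mul 2 2 n]
    norm_num
    ring
  rw [hs4, hpow]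
  have h2 : Real.sqrt (2*(n:ℝ)) ^ 2 = 2*(n:ℝ) := Real.sq_sqrt (by positivity)
  have hP : (((n:ℝ)/Real.exp 1)^n) ≠ 0 := by positivity
  have hfac : ((n.factorial:ℝ)) ≠ 0 := by positivity
  have hsn : Real.sqrt (n:ℝ) ≠ 0 := by positivity
  field_simp
  ring_nf
  rw [Real.sq_sqrt hn'.le, Real.sq_sqrt (by positivity : (0:ℝ) ≤ (n:ℝ)*2)]
  ring

lemma cbf_tendsto : Tendsto cbf atTop (nhds (Real.sqrt Real.pi)⁻¹) := by
  have hpi : (0:ℝ) < Real.sqrt Real.pi := Real.sqrt_pos.mpr Real.pi_pos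
  have h1 : Tendsto (fun n : ℕ => Stirling.stirlingSeq (2*n) / (Stirling.stirlingSeq n)^2)
      atTop (nhds (Real.sqrt Real.pi / (Real.sqrt Real.pi)^2)) := by
    have ha : Tendsto (fun n : ℕ => Stirling.stirlingSeq (2*n)) atTop (nhds (Real.sqrt Real.pi)) :=
      Stirling.tendsto_stirlingSeq_sqrt_pi.comp (tendsto_atTop_atTop_of_monotone
        (fun a b hab => by omega) (fun b => ⟨b, by omega⟩))
    exact ha.div (Stirling.tendsto_stirlingSeq_sqrt_pi.pow 2) (by positivity)
  have h2 : Real.sqrt Real.pi / (Real.sqrt Real.pi)^2 = (Real.sqrt Real.pi)⁻¹ := by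
    field_simp
  rw [← h2]
  apply h1.congr'
  filter_upwards [eventually_ge_atTop 1] with n hn
  exact (cbf_eq_stirling n hn).symm

lemma cbf_le (n : ℕ) : cbf n ≤ (Real.sqrt Real.pi)⁻¹ :=
  cbf_mono.ge_of_tendsto cbf_tendsto n

lemma cb_lower (n : ℕ) (hn : 1 ≤ n) : (4:ℝ)^n / (2*Real.sqrt n) ≤ Nat.centralBinom n := by
  have h1 : cbf 1 ≤ cbf n := cbf_mono hn
  have h2 : cbf 1 = 1/2 := by
    simp [cbf, Nat.centralBinom]
    norm_num
  rw [h2] at h1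
  unfold cbf at h1
  have hs : (0:ℝ) < Real.sqrt n := Real.sqrt_pos.mpr (by exact_mod_cast hn)
  rw [div_le_iff₀ (by positivity)]
  rw [le_div_iff₀ (by positivity)] at h1
  nlinarith [h1]

lemma cb_upper (n : ℕ) (hn : 1 ≤ n) :
    (Nat.centralBinom n : ℝ) ≤ (4:ℝ)^n / (Real.sqrt Real.pi * Real.sqrt n) := by
  have h1 := cbf_le n
  unfold cbf at h1
  have hs : (0:ℝ) < Real.sqrt n := Real.sqrt_pos.mpr (by exact_mod_cast hn)
  have hpi : (0:ℝ) < Real.sqrt Real.pi := Real.sqrt_pos.mpr Real.pi_pos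
  rw [div_le_iff₀ (by positivity)] at h1
  rw [le_div_iff₀ (by positivity)]
  calc (Nat.centralBinom n : ℝ) * (Real.sqrt Real.pi * Real.sqrt n)
      = ((Nat.centralBinom n : ℝ) * Real.sqrt n) * Real.sqrt Real.pi := by ring
    _ ≤ ((Real.sqrt Real.pi)⁻¹ * 4^n) * Real.sqrt Real.pi := by
        apply mul_le_mul_of_nonneg_right h1 hpi.le
    _ = 4^n := by field_simp

lemma choose_mono_below {k a b : ℕ} (hab : a ≤ b) (hb : b ≤ k/2) :
    k.choose a ≤ k.choose b := by
  induction b with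
  | zero =>
    have : a = 0 := by omega
    subst this; rfl
  | succ n ih =>
    rcases Nat.lt_or_ge a (n+1) with h | h
    · calc k.choose a ≤ k.choose n := ih (by omega) (by omega)
        _ ≤ k.choose (n+1) := Nat.choose_le_succ_of_lt_half_left (by omega)
    · have : a = n+1 := by omega
      subst this; rfl

-- ratio lemma
lemma ratio_lemma (k m J : ℕ) (hk : 1 ≤ k) (hm : m = k/2)
    (hJ : 4*J + 2*(k - 2*m) ≤ k + 3) :
    (k.choose m : ℝ) * Real.exp (-(4*Real.log 2) * ((J:ℝ)*((J:ℝ)+(k - 2*m : ℕ))/((k:ℝ)+1))) ≤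
      (k.choose (m - J) : ℝ) := by
  set r : ℕ := k - 2*m with hr
  have hkr : k = 2*m + r := by omega
  have hr1 : r ≤ 1 := by omega
  induction J with
  | zero => simp
  | succ J ih =>
    have hJ' : 4*J + 2*r ≤ k + 3 := by omega
    have hJm : J + 1 ≤ m := by omega
    have hstep : ((k.choose (m - J) : ℝ)) * ((m:ℝ) - J) =
        (k.choose (m - (J+1)) : ℝ) * ((k:ℝ) - m + J + 1) := by
      have h1 := Nat.choose_succ_right_eq k (m - (J+1))
      have h2 : m - (J+1) + 1 = m - J := by omega
      have h3 : k - (m - (J+1)) = k - m + J + 1 := by omega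
      rw [h2, h3] at h1
      have h4 := congrArg (Nat.cast (R := ℝ)) h1
      push_cast at h4
      rw [Nat.cast_sub (show J ≤ m by omega), Nat.cast_sub (show m ≤ k by omega)] at h4
      linear_combination h4
    have ihh := ih hJ'
    set a : ℝ := 4*Real.log 2 with ha_def
    have hla : (0:ℝ) ≤ Real.log 2 := Real.log_nonneg one_le_two
    have ha : 0 ≤ a := by rw [ha_def]; linarith
    set x : ℝ := (2*(J:ℝ)+1+r)/((k:ℝ)+1) with hx_def
    have hk1 : (0:ℝ) < (k:ℝ)+1 := by positivity
    have hx0 : 0 ≤ x := by positivity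
    have hx12 : x ≤ 1/2 := by
      rw [hx_def, div_le_iff₀ hk1]
      have : (4*(J:ℝ)+2*r+2) ≤ (k:ℝ)+1 := by exact_mod_cast (by omega : 4*J+2*r+2 ≤ k+1)
      linarith
    have hmk : (m:ℝ) ≤ (k:ℝ) := by exact_mod_cast (by omega : m ≤ k)
    have hJm' : (J:ℝ)+1 ≤ (m:ℝ) := by exact_mod_cast hJm
    have hpos : (0:ℝ) < (k:ℝ)-m+J+1 := by linarith [Nat.cast_nonneg (α := ℝ) J]
    have hratio : Real.exp (-a*x) ≤ ((m:ℝ)-J)/((k:ℝ)-m+J+1) := by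
      have h := aux_exp_ratio hx0 hx12
      have hkrr : (k:ℝ) = 2*m+r := by exact_mod_cast hkr
      have h1x : 1 - x = 2*((m:ℝ)-J)/((k:ℝ)+1) := by
        rw [hx_def]; field_simp; linear_combination hkrr
      have h2x : 1 + x = 2*((k:ℝ)-m+J+1)/((k:ℝ)+1) := by
        rw [hx_def]; field_simp; linear_combination -hkrr
      have heq : (1-x)/(1+x) = ((m:ℝ)-J)/((k:ℝ)-m+J+1) := by
        rw [h1x, h2x]
        rw [div_div_div_eq]
        rw [mul_comm (2*((m:ℝ)-J)) ((k:ℝ)+1)]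
        rw [mul_div_mul_left _ _ hk1.ne']
        rw [mul_div_mul_left _ _ (two_ne_zero)]
      rw [heq] at h
      exact h
    have hCJ : (0:ℝ) ≤ (k.choose (m-J) : ℝ) := by positivity
    have hCm0 : (0:ℝ) ≤ (k.choose m : ℝ) := by positivity
    have hexp : -a * (((J+1:ℕ):ℝ)*(((J+1:ℕ):ℝ)+(r:ℝ))/((k:ℝ)+1)) =
        -a * ((J:ℝ)*((J:ℝ)+(r:ℝ))/((k:ℝ)+1)) + -a*x := by
      rw [hx_def]
      push_cast
      field_simp
      ring
    calc (k.choose m : ℝ) * Real.exp (-a * (((J+1:ℕ):ℝ)*(((J+1:ℕ):ℝ)+(r:ℝ))/((k:ℝ)+1)))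
        = ((k.choose m : ℝ) * Real.exp (-a * ((J:ℝ)*((J:ℝ)+(r:ℝ))/((k:ℝ)+1)))) * Real.exp (-a*x) := by
          rw [hexp, Real.exp_add]; ring
      _ ≤ (k.choose (m-J) : ℝ) * Real.exp (-a*x) :=
          mul_le_mul_of_nonneg_right ihh (Real.exp_pos _).le
      _ ≤ (k.choose (m-J) : ℝ) * (((m:ℝ)-J)/((k:ℝ)-m+J+1)) :=
          mul_le_mul_of_nonneg_left hratio hCJ
      _ = (k.choose (m-(J+1)) : ℝ) := by
          rw [mul_div_assoc'] at *
          rw [div_eq_iff (ne_of_gt hpos)]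
          linear_combination hstep

lemma sum_choose_even (m : ℕ) :
    2 * ∑ j ∈ Finset.range (m+1), (2*m).choose j = 4^m + (2*m).choose m := by
  have h1 : ∑ j ∈ Finset.range (2*m+1), (2*m).choose j = 4^m := by
    rw [Nat.sum_range_choose, show (4:ℕ) = 2^2 by norm_num, ← pow_mul]
  have h2 : ∑ j ∈ Finset.range (2*m+1), (2*m).choose j =
      (∑ j ∈ Finset.range (m+1), (2*m).choose j) + ∑ i ∈ Finset.range m, (2*m).choose (m+1+i) := by
    rw [show 2*m+1 = (m+1)+m by omega, Finset.sum_range_add]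
  have h3 : ∑ i ∈ Finset.range m, (2*m).choose (m+1+i) =
      ∑ i ∈ Finset.range m, (2*m).choose (m-1-i) := by
    apply Finset.sum_congr rfl
    intro i hi
    have hi' : i < m := Finset.mem_range.mp hi
    have := Nat.choose_symm (show m+1+i ≤ 2*m by omega)
    rw [show 2*m - (m+1+i) = m-1-i by omega] at this
    exact this.symm
  have h4 : ∑ i ∈ Finset.range m, (2*m).choose (m-1-i) =
      ∑ i ∈ Finset.range m, (2*m).choose i := Finset.sum_range_reflect _ m
  have h5 : ∑ j ∈ Finset.range (m+1), (2*m).choose j =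
      (∑ i ∈ Finset.range m, (2*m).choose i) + (2*m).choose m := Finset.sum_range_succ _ m
  omega






set_option maxHeartbeats 1000000 in
/-- Lower bound for binomial tail sums (Lemma on binomial tails, odd and even case). -/
theorem binom_tail_lower_bound (k t : ℕ) (hk : 1 ≤ k) :
    (Odd k → (t : ℝ) ≤ ((k : ℝ) + 3) / 8 →
      (2 : ℝ)⁻¹ ^ k * ∑ j ∈ Finset.range (k / 2 - t + 1), (k.choose j : ℝ) ≥
        1 / (2 + 4 / Real.sqrt Real.pi) *
          Real.exp (-(16 * Real.log 2 * (t : ℝ) ^ 2) / k)) ∧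
    (Even k → (t : ℝ) ≤ ((k : ℝ) + 6) / 8 →
      (2 : ℝ)⁻¹ ^ k * ∑ j ∈ Finset.range (k / 2 - t + 1), (k.choose j : ℝ) ≥
        1 / (2 + 4 / Real.sqrt Real.pi) *
          Real.exp (-(16 * Real.log 2 * ((t : ℝ) - 1 / 2) ^ 2) / k)) := by
  have hsπ : (0:ℝ) < Real.sqrt Real.pi := Real.sqrt_pos.mpr Real.pi_pos
  set c : ℝ := 1 / (2 + 4 / Real.sqrt Real.pi) with hc_def
  have hden : (0:ℝ) < 2 + 4 / Real.sqrt Real.pi := by positivity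
  have hc0 : 0 < c := by positivity
  have hclt : c < 1/2 := by
    rw [hc_def]
    rw [div_lt_div_iff₀ hden (by norm_num)]
    have : 0 < 4 / Real.sqrt Real.pi := by positivity
    linarith
  have hcid : 1/2 - c = 2*c/Real.sqrt Real.pi := by
    rw [hc_def]
    field_simp
    ring
  have hl2 : (0:ℝ) ≤ Real.log 2 := Real.log_nonneg one_le_two
  have hk0 : (0:ℝ) < k := by exact_mod_cast hk
  constructor
  · -- ODD CASE
    rintro ⟨m, hm⟩ ht
    have hm2 : k/2 = m := by omega
    have htn : 8*t ≤ k+3 := by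
      have : (8*t:ℝ) ≤ (k:ℝ)+3 := by linarith
      exact_mod_cast this
    have htm : t ≤ m := by omega
    -- E bounds
    set E : ℝ := Real.exp (-(16 * Real.log 2 * (t : ℝ) ^ 2) / k) with hE_def
    have hE0 : 0 < E := Real.exp_pos _
    have hE1 : E ≤ 1 := by
      rw [hE_def, Real.exp_le_one_iff]
      have h1 : (0:ℝ) ≤ 16 * Real.log 2 * (t:ℝ)^2 := by positivity
      apply div_nonpos_of_nonpos_of_nonneg <;> linarith
    -- B = 2^{-k} C(k,m)
    have hn1 : 1 ≤ m+1 := by omega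
    set sn : ℝ := Real.sqrt ((m:ℝ)+1) with hsn_def
    have hsn0 : 0 < sn := Real.sqrt_pos.mpr (by positivity)
    have hcbid : Nat.centralBinom (m+1) = 2 * k.choose m := by
      have h1 : Nat.centralBinom (m+1) = (2*m+1+1).choose (m+1) := by
        rw [Nat.centralBinom, show 2*(m+1) = 2*m+1+1 from by ring]
      have h2 : (2*m+1+1).choose (m+1) = (2*m+1).choose m + (2*m+1).choose (m+1) :=
        Nat.choose_succ_succ (2*m+1) m
      have h3 : (2*m+1).choose (m+1) = (2*m+1).choose m := by
        have h4 := Nat.choose_symm (show m+1 ≤ 2*m+1 by omega)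
        rw [show 2*m+1-(m+1) = m by omega] at h4
        exact h4.symm
      rw [h1, h2, h3, hm]
      omega
    set B : ℝ := (2:ℝ)⁻¹^k * (k.choose m : ℝ) with hB_def
    have hB_eq : B = (Nat.centralBinom (m+1) : ℝ) / 4^(m+1) := by
      rw [hB_def, hcbid, hm]
      push_cast
      rw [inv_pow, show (4:ℝ)^(m+1) = 2^(2*(m+1)) by rw [pow_mul]; norm_num]
      rw [show 2*(m+1) = (2*m+1)+1 by ring]
      field_simp
      ring
    have hcast1 : ((m:ℝ)+1) = ((m+1:ℕ):ℝ) := by push_cast; ring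
    have hBlow : 1/(2*sn) ≤ B := by
      rw [hB_eq, hsn_def, hcast1]
      rw [div_le_div_iff₀ (by positivity) (by positivity)]
      have h5 := cb_lower (m+1) hn1
      rw [div_le_iff₀ (by positivity)] at h5
      nlinarith [h5]
    have hBup : B ≤ 1/(Real.sqrt Real.pi * sn) := by
      rw [hB_eq, hsn_def, hcast1]
      rw [div_le_div_iff₀ (by positivity) (by positivity)]
      have h5 := cb_upper (m+1) hn1
      rw [le_div_iff₀ (by positivity)] at h5
      nlinarith [h5]
    have hB0 : 0 < B := lt_of_lt_of_le (by positivity) hBlow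
    -- sum facts
    have hCm : ∀ j, k.choose j ≤ k.choose m := by
      intro j
      have h5 := Nat.choose_le_middle j k
      rwa [hm2] at h5
    have hhalf : ∑ j ∈ Finset.range (m+1), k.choose j = 4^m := by
      rw [hm]
      exact Nat.sum_range_choose_halfway m
    have hpow_half : (2:ℝ)⁻¹^k * 4^m = 1/2 := by
      rw [hm, pow_succ, pow_mul, show ((2:ℝ)⁻¹)^2 = (4:ℝ)⁻¹ by norm_num]
      field_simp
      rw [← mul_pow]; norm_num
    rw [hm2]
    rcases le_or_gt ((t:ℝ) * (1/(Real.sqrt Real.pi * sn))) (1/2 - c) with hA | hB2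
    · -- Case A : small t
      have hsplit : (∑ j ∈ Finset.range (m-t+1), k.choose j) +
          ∑ j ∈ Finset.Ico (m-t+1) (m+1), k.choose j = ∑ j ∈ Finset.range (m+1), k.choose j :=
        Finset.sum_range_add_sum_Ico _ (by omega)
      have hIco : ∑ j ∈ Finset.Ico (m-t+1) (m+1), k.choose j ≤ t * k.choose m := by
        calc ∑ j ∈ Finset.Ico (m-t+1) (m+1), k.choose j
            ≤ (Finset.Ico (m-t+1) (m+1)).card • k.choose m :=
              Finset.sum_le_card_nsmul _ _ _ (fun j _ => hCm j)
          _ = t * k.choose m := by rw [Nat.card_Ico, smul_eq_mul]; congr 1; omega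
      have hSlow : (4:ℝ)^m - t * k.choose m ≤ ∑ j ∈ Finset.range (m-t+1), (k.choose j : ℝ) := by
        have h1 : 4^m ≤ (∑ j ∈ Finset.range (m-t+1), k.choose j) + t * k.choose m := by omega
        have h2 : ((4:ℕ):ℝ)^m ≤ ((∑ j ∈ Finset.range (m-t+1), k.choose j : ℕ) : ℝ) +
            (t:ℝ) * (k.choose m :ℝ) := by exact_mod_cast h1
        push_cast at h2
        linarith
      have hgoal : c * E ≤ (2:ℝ)⁻¹^k * ∑ j ∈ Finset.range (m-t+1), (k.choose j : ℝ) := by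
        calc c * E ≤ c * 1 := mul_le_mul_of_nonneg_left hE1 hc0.le
          _ = c := mul_one c
          _ ≤ 1/2 - t * B := by
              have h6 : (t:ℝ) * B ≤ (t:ℝ) * (1/(Real.sqrt Real.pi * sn)) :=
                mul_le_mul_of_nonneg_left hBup (by positivity)
              linarith
          _ ≤ (2:ℝ)⁻¹^k * ∑ j ∈ Finset.range (m-t+1), (k.choose j : ℝ) := by
              have h3 := mul_le_mul_of_nonneg_left hSlow (show (0:ℝ) ≤ (2:ℝ)⁻¹^k by positivity)
              rw [mul_sub] at h3
              have h4 : (2:ℝ)⁻¹^k * ((t:ℝ) * (k.choose m:ℝ)) = (t:ℝ)*B := by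
                rw [hB_def]; ring
              linarith [h3, hpow_half, h4]
      exact hgoal
    · -- Case B : large t
      have ht1 : 1 ≤ t := by
        by_contra h
        push_neg at h
        interval_cases t
        simp at hB2
        linarith [hclt]
      have hsub : ∑ j ∈ Finset.Ico (m+1-2*t) (m+1-t), k.choose j ≤
          ∑ j ∈ Finset.range (m-t+1), k.choose j := by
        apply Finset.sum_le_sum_of_subset
        intro j hj
        simp only [Finset.mem_Ico, Finset.mem_range] at *
        omega
      have hterm : ∀ j ∈ Finset.Ico (m+1-2*t) (m+1-t), k.choose (m-(2*t-1)) ≤ k.choose j := by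
        intro j hj
        simp only [Finset.mem_Ico] at hj
        exact choose_mono_below (by omega) (by omega)
      have hcard : t * k.choose (m-(2*t-1)) ≤ ∑ j ∈ Finset.Ico (m+1-2*t) (m+1-t), k.choose j := by
        calc t * k.choose (m-(2*t-1))
            = (Finset.Ico (m+1-2*t) (m+1-t)).card • k.choose (m-(2*t-1)) := by
              rw [Nat.card_Ico, smul_eq_mul]; congr 1; omega
          _ ≤ _ := Finset.card_nsmul_le_sum _ _ _ hterm
      have hrl := ratio_lemma k m (2*t-1) hk hm2.symm (by omega)
      have hr1 : k - 2*m = 1 := by omega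
      rw [hr1] at hrl
      have hexpcmp : E ≤ Real.exp (-(4*Real.log 2) *
          (((2*t-1:ℕ):ℝ)*(((2*t-1:ℕ):ℝ)+((1:ℕ):ℝ))/((k:ℝ)+1))) := by
        rw [hE_def]
        apply Real.exp_le_exp.mpr
        rw [Nat.cast_sub (by omega)]
        push_cast
        have hgoal2 : (4*Real.log 2) * ((2*(t:ℝ)-1)*(2*(t:ℝ)-1+1)) / ((k:ℝ)+1) ≤
            (16*Real.log 2*(t:ℝ)^2)/(k:ℝ) := by
          rw [div_le_div_iff₀ (by positivity) hk0]
          have t0 : (0:ℝ) ≤ (t:ℝ) := Nat.cast_nonneg t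
          nlinarith [mul_nonneg (mul_nonneg hl2 t0) hk0.le,
            mul_nonneg (mul_nonneg hl2 t0) t0]
        have h10 := neg_le_neg hgoal2
        exact (le_of_eq (by ring)).trans (h10.trans (le_of_eq (by ring)))
      have hchain : (t:ℝ) * ((k.choose m : ℝ) * E) ≤ ∑ j ∈ Finset.range (m-t+1), (k.choose j : ℝ) := by
        calc (t:ℝ) * ((k.choose m : ℝ) * E)
            ≤ (t:ℝ) * (k.choose (m-(2*t-1)) : ℝ) := by
              apply mul_le_mul_of_nonneg_left ?_ (Nat.cast_nonneg t)
              calc (k.choose m : ℝ) * E ≤ (k.choose m : ℝ) *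
                  Real.exp (-(4*Real.log 2) * (((2*t-1:ℕ):ℝ)*(((2*t-1:ℕ):ℝ)+((1:ℕ):ℝ))/((k:ℝ)+1))) :=
                    mul_le_mul_of_nonneg_left hexpcmp (Nat.cast_nonneg _)
                _ ≤ _ := hrl
          _ ≤ _ := by
              have h7 : ((t * k.choose (m-(2*t-1)) : ℕ) : ℝ) ≤
                  ((∑ j ∈ Finset.range (m-t+1), k.choose j : ℕ) : ℝ) := by
                exact_mod_cast le_trans hcard hsub
              push_cast at h7
              exact h7
      have hfin : (t:ℝ) * (B * E) ≤ (2:ℝ)⁻¹^k * ∑ j ∈ Finset.range (m-t+1), (k.choose j : ℝ) := by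
        have h8 := mul_le_mul_of_nonneg_left hchain (show (0:ℝ) ≤ (2:ℝ)⁻¹^k by positivity)
        have h9 : (2:ℝ)⁻¹^k * ((t:ℝ)*((k.choose m:ℝ)*E)) = (t:ℝ)*(B*E) := by
          rw [hB_def]; ring
        linarith [h8, h9]
      have hcB : c < (t:ℝ) * B := by
        have h1 : 2*c/Real.sqrt Real.pi < (t:ℝ) * (1/(Real.sqrt Real.pi * sn)) := by linarith
        have h2 : 2*c < (t:ℝ)/sn := by
          rw [lt_div_iff₀ hsn0]
          have h3 := mul_lt_mul_of_pos_right h1 (mul_pos hsπ hsn0)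
          calc 2*c*sn = 2*c/Real.sqrt Real.pi * (Real.sqrt Real.pi * sn) := by field_simp
            _ < (t:ℝ) * (1/(Real.sqrt Real.pi * sn)) * (Real.sqrt Real.pi * sn) := h3
            _ = (t:ℝ) := by field_simp
        calc c = (2*c) * (1/2) := by ring
          _ < ((t:ℝ)/sn) * (1/2) := by linarith
          _ = (t:ℝ) * (1/(2*sn)) := by ring
          _ ≤ (t:ℝ) * B := mul_le_mul_of_nonneg_left hBlow (Nat.cast_nonneg t)
      calc c * E ≤ ((t:ℝ) * B) * E := mul_le_mul_of_nonneg_right hcB.le hE0.le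
        _ = (t:ℝ) * (B * E) := by ring
        _ ≤ _ := hfin
  · -- EVEN CASE
    rintro hev ht
    obtain ⟨m, hm0⟩ := hev
    have hm : k = 2*m := by omega
    have hm2 : k/2 = m := by omega
    have hm1 : 1 ≤ m := by omega
    have htn : 8*t ≤ k+6 := by
      have h : (8*t:ℝ) ≤ (k:ℝ)+6 := by linarith
      exact_mod_cast h
    have htm : t ≤ m := by omega
    set E : ℝ := Real.exp (-(16 * Real.log 2 * ((t:ℝ) - 1/2) ^ 2) / k) with hE_def
    have hE0 : 0 < E := Real.exp_pos _
    have hE1 : E ≤ 1 := by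
      rw [hE_def, Real.exp_le_one_iff]
      have h1 : (0:ℝ) ≤ 16 * Real.log 2 * ((t:ℝ)-1/2)^2 := by positivity
      apply div_nonpos_of_nonpos_of_nonneg <;> linarith
    set sn : ℝ := Real.sqrt (m:ℝ) with hsn_def
    have hsn0 : 0 < sn := Real.sqrt_pos.mpr (by exact_mod_cast hm1)
    set B : ℝ := (2:ℝ)⁻¹^k * (k.choose m : ℝ) with hB_def
    have hB_eq : B = (Nat.centralBinom m : ℝ) / 4^m := by
      rw [hB_def, Nat.centralBinom, hm]
      rw [inv_pow, show (4:ℝ)^m = 2^(2*m) by rw [pow_mul]; norm_num]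
      ring
    have hBlow : 1/(2*sn) ≤ B := by
      rw [hB_eq, hsn_def]
      rw [div_le_div_iff₀ (by positivity) (by positivity)]
      have h5 := cb_lower m hm1
      rw [div_le_iff₀ (by positivity)] at h5
      nlinarith [h5]
    have hBup : B ≤ 1/(Real.sqrt Real.pi * sn) := by
      rw [hB_eq, hsn_def]
      rw [div_le_div_iff₀ (by positivity) (by positivity)]
      have h5 := cb_upper m hm1
      rw [le_div_iff₀ (by positivity)] at h5
      nlinarith [h5]
    have hB0 : 0 < B := lt_of_lt_of_le (by positivity) hBlow
    have hCm : ∀ j, k.choose j ≤ k.choose m := by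
      intro j
      have h5 := Nat.choose_le_middle j k
      rwa [hm2] at h5
    have hhalf : 2 * ∑ j ∈ Finset.range (m+1), k.choose j = 4^m + k.choose m := by
      rw [hm]
      exact sum_choose_even m
    have hpow_even : (2:ℝ)⁻¹^k * 4^m = 1 := by
      rw [hm, inv_pow, show (4:ℝ)^m = 2^(2*m) by rw [pow_mul]; norm_num]
      field_simp
    rw [hm2]
    by_cases ht0 : t = 0
    · subst ht0
      have hS : ((4:ℝ)^m + (k.choose m:ℝ))/2 ≤ ∑ j ∈ Finset.range (m-0+1), (k.choose j : ℝ) := by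
        have h1 : (2:ℝ) * ∑ j ∈ Finset.range (m+1), (k.choose j:ℝ) =
            (4:ℝ)^m + (k.choose m:ℝ) := by exact_mod_cast hhalf
        simp only [Nat.sub_zero]
        linarith
      have hfin := mul_le_mul_of_nonneg_left hS (show (0:ℝ) ≤ (2:ℝ)⁻¹^k by positivity)
      have hCnn : (0:ℝ) ≤ (2:ℝ)⁻¹^k * (k.choose m:ℝ) := by positivity
      calc c * E ≤ c * 1 := mul_le_mul_of_nonneg_left hE1 hc0.le
        _ = c := mul_one c
        _ ≤ 1/2 := hclt.le
        _ ≤ (2:ℝ)⁻¹^k * (((4:ℝ)^m + (k.choose m:ℝ))/2) := by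
            have : (2:ℝ)⁻¹^k * (((4:ℝ)^m + (k.choose m:ℝ))/2) =
                1/2 + ((2:ℝ)⁻¹^k * (k.choose m:ℝ))/2 := by
              linear_combination hpow_even/2
            rw [this]
            linarith [hCnn]
        _ ≤ _ := hfin
    · have ht1 : 1 ≤ t := by omega
      have ht12 : (1:ℝ) ≤ (t:ℝ) := by exact_mod_cast ht1
      rcases le_or_gt (((t:ℝ)-1/2) * (1/(Real.sqrt Real.pi * sn))) (1/2 - c) with hA | hB2
      · -- Case A
        have hsplit : (∑ j ∈ Finset.range (m-t+1), k.choose j) +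
            ∑ j ∈ Finset.Ico (m-t+1) (m+1), k.choose j = ∑ j ∈ Finset.range (m+1), k.choose j :=
          Finset.sum_range_add_sum_Ico _ (by omega)
        have hIco : ∑ j ∈ Finset.Ico (m-t+1) (m+1), k.choose j ≤ t * k.choose m := by
          calc ∑ j ∈ Finset.Ico (m-t+1) (m+1), k.choose j
              ≤ (Finset.Ico (m-t+1) (m+1)).card • k.choose m :=
                Finset.sum_le_card_nsmul _ _ _ (fun j _ => hCm j)
            _ = t * k.choose m := by rw [Nat.card_Ico, smul_eq_mul]; congr 1; omega
        have hSlow : ((4:ℝ)^m + (k.choose m:ℝ))/2 - t * (k.choose m:ℝ) ≤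
            ∑ j ∈ Finset.range (m-t+1), (k.choose j : ℝ) := by
          have h1 : 4^m + k.choose m ≤ 2*(∑ j ∈ Finset.range (m-t+1), k.choose j) +
              2*(t * k.choose m) := by omega
          have h2 : ((4^m + k.choose m : ℕ):ℝ) ≤
              ((2*(∑ j ∈ Finset.range (m-t+1), k.choose j) + 2*(t * k.choose m) : ℕ):ℝ) := by
            exact_mod_cast h1
          push_cast at h2
          linarith
        calc c * E ≤ c * 1 := mul_le_mul_of_nonneg_left hE1 hc0.le
          _ = c := mul_one c
          _ ≤ 1/2 - ((t:ℝ)-1/2) * B := by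
              have h6 : ((t:ℝ)-1/2) * B ≤ ((t:ℝ)-1/2) * (1/(Real.sqrt Real.pi * sn)) :=
                mul_le_mul_of_nonneg_left hBup (by linarith)
              linarith
          _ ≤ (2:ℝ)⁻¹^k * ∑ j ∈ Finset.range (m-t+1), (k.choose j : ℝ) := by
              have h3 := mul_le_mul_of_nonneg_left hSlow (show (0:ℝ) ≤ (2:ℝ)⁻¹^k by positivity)
              have h4 : (2:ℝ)⁻¹^k * (((4:ℝ)^m + (k.choose m:ℝ))/2 - (t:ℝ) * (k.choose m:ℝ)) =
                  1/2 + B/2 - (t:ℝ)*B := by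
                rw [hB_def]
                linear_combination hpow_even/2
              rw [h4] at h3
              have h5 : 1/2 - ((t:ℝ)-1/2) * B = 1/2 + B/2 - (t:ℝ)*B := by ring
              linarith
      · -- Case B
        have hsub : ∑ j ∈ Finset.Ico (m+1-2*t) (m+1-t), k.choose j ≤
            ∑ j ∈ Finset.range (m-t+1), k.choose j := by
          apply Finset.sum_le_sum_of_subset
          intro j hj
          simp only [Finset.mem_Ico, Finset.mem_range] at *
          omega
        have hterm : ∀ j ∈ Finset.Ico (m+1-2*t) (m+1-t), k.choose (m-(2*t-1)) ≤ k.choose j := by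
          intro j hj
          simp only [Finset.mem_Ico] at hj
          exact choose_mono_below (by omega) (by omega)
        have hcard : t * k.choose (m-(2*t-1)) ≤ ∑ j ∈ Finset.Ico (m+1-2*t) (m+1-t), k.choose j := by
          calc t * k.choose (m-(2*t-1))
              = (Finset.Ico (m+1-2*t) (m+1-t)).card • k.choose (m-(2*t-1)) := by
                rw [Nat.card_Ico, smul_eq_mul]; congr 1; omega
            _ ≤ _ := Finset.card_nsmul_le_sum _ _ _ hterm
        have hrl := ratio_lemma k m (2*t-1) hk hm2.symm (by omega)
        have hr1 : k - 2*m = 0 := by omega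
        rw [hr1] at hrl
        have hexpcmp : E ≤ Real.exp (-(4*Real.log 2) *
            (((2*t-1:ℕ):ℝ)*(((2*t-1:ℕ):ℝ)+((0:ℕ):ℝ))/((k:ℝ)+1))) := by
          rw [hE_def]
          apply Real.exp_le_exp.mpr
          rw [Nat.cast_sub (by omega)]
          push_cast
          have hgoal2 : (4*Real.log 2) * ((2*(t:ℝ)-1)*(2*(t:ℝ)-1+0)) / ((k:ℝ)+1) ≤
              (16*Real.log 2*((t:ℝ)-1/2)^2)/(k:ℝ) := by
            rw [div_le_div_iff₀ (by positivity) hk0]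
            nlinarith [mul_nonneg hl2 (sq_nonneg (2*(t:ℝ)-1))]
          have h10 := neg_le_neg hgoal2
          exact (le_of_eq (by ring)).trans (h10.trans (le_of_eq (by ring)))
        have hchain : (t:ℝ) * ((k.choose m : ℝ) * E) ≤
            ∑ j ∈ Finset.range (m-t+1), (k.choose j : ℝ) := by
          calc (t:ℝ) * ((k.choose m : ℝ) * E)
              ≤ (t:ℝ) * (k.choose (m-(2*t-1)) : ℝ) := by
                apply mul_le_mul_of_nonneg_left ?_ (Nat.cast_nonneg t)
                calc (k.choose m : ℝ) * E ≤ (k.choose m : ℝ) *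
                    Real.exp (-(4*Real.log 2) *
                      (((2*t-1:ℕ):ℝ)*(((2*t-1:ℕ):ℝ)+((0:ℕ):ℝ))/((k:ℝ)+1))) :=
                      mul_le_mul_of_nonneg_left hexpcmp (Nat.cast_nonneg _)
                  _ ≤ _ := hrl
            _ ≤ _ := by
                have h7 : ((t * k.choose (m-(2*t-1)) : ℕ) : ℝ) ≤
                    ((∑ j ∈ Finset.range (m-t+1), k.choose j : ℕ) : ℝ) := by
                  exact_mod_cast le_trans hcard hsub
                push_cast at h7
                exact h7
        have hfin : (t:ℝ) * (B * E) ≤ (2:ℝ)⁻¹^k * ∑ j ∈ Finset.range (m-t+1), (k.choose j : ℝ) := by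
          have h8 := mul_le_mul_of_nonneg_left hchain (show (0:ℝ) ≤ (2:ℝ)⁻¹^k by positivity)
          have h9 : (2:ℝ)⁻¹^k * ((t:ℝ)*((k.choose m:ℝ)*E)) = (t:ℝ)*(B*E) := by
            rw [hB_def]; ring
          linarith [h8, h9]
        have hcB : c < (t:ℝ) * B := by
          have h1 : 2*c/Real.sqrt Real.pi < ((t:ℝ)-1/2) * (1/(Real.sqrt Real.pi * sn)) := by
            linarith
          have h2 : 2*c < ((t:ℝ)-1/2)/sn := by
            rw [lt_div_iff₀ hsn0]
            have h3 := mul_lt_mul_of_pos_right h1 (mul_pos hsπ hsn0)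
            calc 2*c*sn = 2*c/Real.sqrt Real.pi * (Real.sqrt Real.pi * sn) := by field_simp
              _ < ((t:ℝ)-1/2) * (1/(Real.sqrt Real.pi * sn)) * (Real.sqrt Real.pi * sn) := h3
              _ = ((t:ℝ)-1/2) := by field_simp
          have h4 : ((t:ℝ)-1/2)/sn ≤ (t:ℝ)/sn := by gcongr <;> linarith
          calc c = (2*c) * (1/2) := by ring
            _ < (((t:ℝ)-1/2)/sn) * (1/2) := by linarith
            _ ≤ ((t:ℝ)/sn) * (1/2) := by linarith
            _ = (t:ℝ) * (1/(2*sn)) := by ring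
            _ ≤ (t:ℝ) * B := mul_le_mul_of_nonneg_left hBlow (Nat.cast_nonneg t)
        calc c * E ≤ ((t:ℝ) * B) * E := mul_le_mul_of_nonneg_right hcB.le hE0.le
          _ = (t:ℝ) * (B * E) := by ring
          _ ≤ _ := hfin
end

section
/- For all natural numbers k, k' with k ≥ k', one has 2^{-k} · [ Σ_{j=0}^{⌊(k - k')/2⌋} C(k,j) + Σ_{j=⌈(k + k' + 1)/2⌉}^{k} C(k,j) ] ≥ 2^{-k'}. -/
lemma tail_reflect (n d : ℕ) (hd : d ≤ n) :
    ∑ j ∈ Finset.Icc (n - d + d / 2 + 1) n, n.choose j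
      = ∑ j ∈ Finset.range (d - d / 2), n.choose j := by
  rw [← Finset.Ico_add_one_right_eq_Icc, Finset.sum_Ico_eq_sum_range]
  have h1 : n + 1 - (n - d + d / 2 + 1) = d - d / 2 := by omega
  rw [h1, ← Finset.sum_range_reflect]
  refine Finset.sum_congr rfl fun j hj => ?_
  simp only [Finset.mem_range] at hj
  have h2 : n - d + d / 2 + 1 + (d - d / 2 - 1 - j) = n - j := by omega
  rw [h2, Nat.choose_symm (by omega)]

lemma key (k d : ℕ) (hd : d ≤ k) :
    2 ^ d ≤ (∑ j ∈ Finset.range (d / 2 + 1), k.choose j)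
      + ∑ j ∈ Finset.Icc (k - d + d / 2 + 1) k, k.choose j := by
  rw [tail_reflect k d hd]
  have hbase : (∑ j ∈ Finset.range (d / 2 + 1), d.choose j)
      + ∑ j ∈ Finset.range (d - d / 2), d.choose j = 2 ^ d := by
    rw [← tail_reflect d d le_rfl]
    have h3 : d - d + d / 2 + 1 = d / 2 + 1 := by omega
    rw [h3, ← Finset.Ico_add_one_right_eq_Icc, Finset.range_eq_Ico,
      Finset.sum_Ico_consecutive _ (Nat.zero_le _) (by omega),
      ← Finset.range_eq_Ico, Nat.sum_range_choose]
  calc 2 ^ d = _ := hbase.symm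
    _ ≤ _ := by
        gcongr with j hj <;> exact Nat.choose_le_choose _ hd

/-- For all natural numbers `k ≥ k'`,
`2⁻ᵏ · [ Σ_{j=0}^{⌊(k-k')/2⌋} C(k,j) + Σ_{j=⌈(k+k'+1)/2⌉}^{k} C(k,j) ] ≥ 2^{-k'}`. -/
theorem binom_two_tails_lower_bound (k k' : ℕ) (h : k' ≤ k) :
    (2 : ℝ)⁻¹ ^ k *
        ((∑ j ∈ Finset.range ((k - k') / 2 + 1), (k.choose j : ℝ)) +
          ∑ j ∈ Finset.Icc ((k + k' + 2) / 2) k, (k.choose j : ℝ)) ≥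
      (2 : ℝ)⁻¹ ^ k' := by
  set d := k - k' with hdd
  have hd : d ≤ k := Nat.sub_le _ _
  have hidx : (k + k' + 2) / 2 = k - d + d / 2 + 1 := by omega
  have hk := key k d hd
  have hcast : (2 : ℝ) ^ d ≤
      (∑ j ∈ Finset.range ((k - k') / 2 + 1), (k.choose j : ℝ)) +
        ∑ j ∈ Finset.Icc ((k + k' + 2) / 2) k, (k.choose j : ℝ) := by
    rw [hidx]
    exact_mod_cast hk
  have hpos : (0 : ℝ) < 2⁻¹ ^ k := by positivity
  have hkey : (2 : ℝ)⁻¹ ^ k * 2 ^ d = 2⁻¹ ^ k' := by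
    have : k = k' + d := by omega
    rw [this, pow_add, mul_assoc, ← mul_pow, inv_mul_cancel₀ (by norm_num : (2:ℝ) ≠ 0), one_pow, mul_one]
  calc (2 : ℝ)⁻¹ ^ k * _ ≥ 2⁻¹ ^ k * 2 ^ d := by gcongr
    _ = 2⁻¹ ^ k' := hkey
end

section
/- For every natural number k ≥ 1, the central binomial coefficient satisfies C(k, ⌊k/2⌋) < 2^k / √(π · ⌈k/2⌉). -/
open Real Nat

/-- Key fact: `π * n * ((2n)!)^2 < 2^(4n) * (n!)^4` for `n ≥ 1`. -/
lemma key_fact (n : ℕ) (hn : 1 ≤ n) :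
    Real.pi * n * ((2 * n)! : ℝ) ^ 2 < 2 ^ (4 * n) * ((n ! : ℝ)) ^ 4 := by
  have h1 := Real.Wallis.le_W n
  have h2 := Real.Wallis.W_eq_factorial_ratio n
  rw [h2] at h1
  have hf : (0 : ℝ) < ((2 * n)! : ℝ) := by positivity
  have hn1 : (1 : ℝ) ≤ (n : ℝ) := by exact_mod_cast hn
  have hπ := Real.pi_pos
  have key : Real.pi * (2 * (n : ℝ) + 1) ^ 2 * ((2 * n)! : ℝ) ^ 2 ≤
      (2 * (n : ℝ) + 2) * 2 * (2 ^ (4 * n) * ((n ! : ℝ)) ^ 4) := by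
    have h3 : (0 : ℝ) < ((2 * n)! : ℝ) ^ 2 * (2 * n + 1) := by positivity
    rw [div_mul_eq_mul_div, div_le_div_iff₀ (by positivity) h3] at h1
    nlinarith [h1]
  have hstrict : Real.pi * (n : ℝ) * (2 * (n : ℝ) + 2) * 2 <
      Real.pi * (2 * (n : ℝ) + 1) ^ 2 := by nlinarith
  have hF2 : (0 : ℝ) < ((2 * n)! : ℝ) ^ 2 := by positivity
  have step1 := mul_lt_mul_of_pos_right hstrict hF2
  have final : ((2 * (n : ℝ) + 2) * 2) * (Real.pi * n * ((2 * n)! : ℝ) ^ 2) <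
      ((2 * (n : ℝ) + 2) * 2) * (2 ^ (4 * n) * ((n ! : ℝ)) ^ 4) := by nlinarith [step1, key]
  exact lt_of_mul_lt_mul_left final (by positivity)

/-- Central binomial upper bound: `centralBinom n < 4^n / √(π n)` for `n ≥ 1`. -/
lemma centralBinom_lt (n : ℕ) (hn : 1 ≤ n) :
    (Nat.centralBinom n : ℝ) < 4 ^ n / Real.sqrt (Real.pi * n) := by
  have hn1 : (1 : ℝ) ≤ (n : ℝ) := by exact_mod_cast hn
  have hπ := Real.pi_pos
  have hpn : (0 : ℝ) < Real.pi * n := by nlinarith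
  have hfact : ((2 * n)! : ℝ) = (Nat.centralBinom n : ℝ) * (n ! : ℝ) * (n ! : ℝ) := by
    have := Nat.choose_mul_factorial_mul_factorial (Nat.le_mul_of_pos_left n (by norm_num) :
      n ≤ 2 * n)
    rw [Nat.centralBinom]
    have h2 : 2 * n - n = n := by omega
    rw [h2] at this
    exact_mod_cast this.symm
  have hC : (0 : ℝ) < (Nat.centralBinom n : ℝ) := by
    exact_mod_cast Nat.centralBinom_pos n
  have hnf : (0 : ℝ) < (n ! : ℝ) := by positivity
  have hkey := key_fact n hn
  rw [hfact] at hkey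
  -- square version
  have hsq : ((Nat.centralBinom n : ℝ) * Real.sqrt (Real.pi * n)) ^ 2 < ((4 : ℝ) ^ n) ^ 2 := by
    rw [mul_pow, Real.sq_sqrt hpn.le]
    have h4 : ((4 : ℝ) ^ n) ^ 2 = 2 ^ (4 * n) := by
      rw [← pow_mul, show (4:ℝ) = 2^2 by norm_num, ← pow_mul]; ring_nf
    rw [h4]
    have h5 : ((Nat.centralBinom n : ℝ) ^ 2 * (Real.pi * n)) * ((n ! : ℝ)) ^ 4 <
        2 ^ (4 * n) * ((n ! : ℝ)) ^ 4 := by nlinarith [hkey]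
    exact lt_of_mul_lt_mul_right h5 (by positivity)
  have hlt : (Nat.centralBinom n : ℝ) * Real.sqrt (Real.pi * n) < 4 ^ n := by
    exact lt_of_pow_lt_pow_left₀ 2 (by positivity) hsq
  rw [lt_div_iff₀ (Real.sqrt_pos.mpr hpn)]
  exact hlt

/-- For every `k ≥ 1`, the central binomial coefficient satisfies
`C(k, ⌊k/2⌋) < 2^k / √(π · ⌈k/2⌉)`. -/
theorem central_binom_upper_bound (k : ℕ) (hk : 1 ≤ k) :
    (k.choose (k / 2) : ℝ) <
      2 ^ k / Real.sqrt (Real.pi * (((k + 1) / 2 : ℕ) : ℝ)) := by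
  rcases Nat.even_or_odd k with ⟨n, hn⟩ | ⟨m, hm⟩
  · -- k = 2n
    subst hn
    have hn1 : 1 ≤ n := by omega
    have h1 : (n + n) / 2 = n := by omega
    have h2 : (n + n + 1) / 2 = n := by omega
    rw [h1, h2]
    have := centralBinom_lt n hn1
    rw [Nat.centralBinom, show 2 * n = n + n by ring] at this
    calc ((n + n).choose n : ℝ) < 4 ^ n / Real.sqrt (Real.pi * n) := this
      _ = 2 ^ (n + n) / Real.sqrt (Real.pi * n) := by
          rw [show (4:ℝ) = 2^2 by norm_num, ← pow_mul]; ring_nf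
  · -- k = 2m + 1
    subst hm
    have h1 : (2 * m + 1) / 2 = m := by omega
    have h2 : (2 * m + 1 + 1) / 2 = m + 1 := by omega
    rw [h1, h2]
    have hdouble : 2 * (2 * m + 1).choose m = Nat.centralBinom (m + 1) := by
      rw [Nat.centralBinom, show 2 * (m + 1) = (2 * m + 1) + 1 by ring,
        Nat.choose_succ_succ]
      have : (2 * m + 1).choose (m + 1) = (2 * m + 1).choose m := by
        have h := Nat.choose_symm (show m + 1 ≤ 2 * m + 1 by omega)
        have hsub : 2 * m + 1 - (m + 1) = m := by omega
        rw [hsub] at h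
        exact h.symm
      rw [this]; ring
    have hlt := centralBinom_lt (m + 1) (by omega)
    have hcast : (2 : ℝ) * ((2 * m + 1).choose m : ℝ) = (Nat.centralBinom (m + 1) : ℝ) := by
      exact_mod_cast congrArg (Nat.cast : ℕ → ℝ) hdouble
    have hs : (0 : ℝ) < Real.sqrt (Real.pi * ((m : ℝ) + 1)) := by
      apply Real.sqrt_pos.mpr; positivity
    have hcast1 : ((m + 1 : ℕ) : ℝ) = (m : ℝ) + 1 := by push_cast; ring
    rw [hcast1] at hlt
    have : ((2 * m + 1).choose m : ℝ) < 4 ^ (m + 1) / Real.sqrt (Real.pi * ((m : ℝ) + 1)) / 2 := by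
      rw [div_div]
      rw [lt_div_iff₀ (by positivity)] at hlt ⊢
      nlinarith [hlt, hcast]
    calc ((2 * m + 1).choose m : ℝ)
        < 4 ^ (m + 1) / Real.sqrt (Real.pi * ((m : ℝ) + 1)) / 2 := this
      _ = 2 ^ (2 * m + 1) / Real.sqrt (Real.pi * ((m : ℝ) + 1)) := by
          rw [show (4:ℝ) = 2^2 by norm_num, ← pow_mul]
          field_simp
          ring_nf
      _ = 2 ^ (2 * m + 1) / Real.sqrt (Real.pi * ((m + 1 : ℕ) : ℝ)) := by rw [hcast1]
end

section
/- Let k ∈ ℕ and t ∈ ℕ with 2t - 1 ≥ 1 and ⌊k/2⌋ - 2t + 1 ≥ 0. Then C(k, ⌊k/2⌋ - 2t + 1) ≥ C(k, ⌊k/2⌋) · ( (⌊k/2⌋ - 2t + 2) / (⌈k/2⌉ + 1) )^{2t-1}. -/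
open Finset

/-- Product identity: `C(N,m) * ∏_{i<s} (m-i) = C(N,m-s) * ∏_{i<s} (N-m+1+i)`. -/
lemma choose_prod_shift (N m : ℕ) (hm : m ≤ N) :
    ∀ s, s ≤ m →
      N.choose m * ∏ i ∈ range s, (m - i) =
        N.choose (m - s) * ∏ i ∈ range s, (N - m + 1 + i) := by
  intro s
  induction s with
  | zero => simp
  | succ s ih =>
    intro hs
    have hs' : s ≤ m := by omega
    rw [prod_range_succ, prod_range_succ, ← mul_assoc, ih hs']
    have h := Nat.choose_succ_right_eq N (m - s - 1)
    have h1 : m - s - 1 + 1 = m - s := by omega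
    have h2 : N - (m - s - 1) = N - m + 1 + s := by omega
    rw [h1, h2] at h
    have h3 : m - (s + 1) = m - s - 1 := by omega
    rw [h3]
    calc N.choose (m - s) * (∏ i ∈ range s, (N - m + 1 + i)) * (m - s)
        = N.choose (m - s) * (m - s) * ∏ i ∈ range s, (N - m + 1 + i) := by ring
      _ = N.choose (m - s - 1) * (N - m + 1 + s) * ∏ i ∈ range s, (N - m + 1 + i) := by rw [h]
      _ = N.choose (m - s - 1) * ((∏ i ∈ range s, (N - m + 1 + i)) * (N - m + 1 + s)) := by ring

/-- Pointwise inequality used for the paired product bound. -/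
lemma pointwise_pair (u A i j : ℕ) (hA : u ≤ A) :
    u ^ 2 * ((A + i) * (A + j)) ≤ (u + j) * (u + i) * A ^ 2 := by
  obtain ⟨d, rfl⟩ := Nat.exists_eq_add_of_le hA
  nlinarith [Nat.zero_le (d * (u * (u + d) * (i + j))), Nat.zero_le (d * (i * j * (2 * u + d)))]

/-- Key natural-number inequality:
`C(N,m) * (m-s+1)^s ≤ C(N, m-s) * (a+1)^s` when `m + a = N`, `m ≤ a`, `1 ≤ s ≤ m`. -/
lemma key_choose_ineq (N m s a : ℕ) (hNa : m + a = N) (hma : m ≤ a)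
    (hs1 : 1 ≤ s) (hsm : s ≤ m) :
    N.choose m * (m - s + 1) ^ s ≤ N.choose (m - s) * (a + 1) ^ s := by
  have hmN : m ≤ N := by omega
  have hid : N.choose m * ∏ i ∈ range s, (m - i) =
      N.choose (m - s) * ∏ i ∈ range s, (a + 1 + i) := by
    have h := choose_prod_shift N m hmN s hsm
    have hNm : N - m + 1 = a + 1 := by omega
    simp only [hNm] at h
    exact h
  -- products with constants
  have hX2 : (∏ i ∈ range s, ((m - i) * (a + 1))) * (∏ i ∈ range s, ((m - i) * (a + 1))) =
      ∏ i ∈ range s, ((m - s + 1 + i) * (m - i) * ((a + 1) * (a + 1))) := by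
    nth_rewrite 1 [← prod_range_reflect (fun i => (m - i) * (a + 1)) s]
    rw [← prod_mul_distrib]
    apply prod_congr rfl
    intro i hi
    rw [mem_range] at hi
    have : m - (s - 1 - i) = m - s + 1 + i := by omega
    rw [this]; ring
  have hY2 : (∏ i ∈ range s, ((m - s + 1) * (a + 1 + i))) *
        (∏ i ∈ range s, ((m - s + 1) * (a + 1 + i))) =
      ∏ i ∈ range s, ((m - s + 1) * (m - s + 1) * ((a + 1 + (s - 1 - i)) * (a + 1 + i))) := by
    nth_rewrite 1 [← prod_range_reflect (fun i => (m - s + 1) * (a + 1 + i)) s]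
    rw [← prod_mul_distrib]
    apply prod_congr rfl
    intro i hi
    ring
  have hYX : (∏ i ∈ range s, ((m - s + 1) * (a + 1 + i))) ≤
      ∏ i ∈ range s, ((m - i) * (a + 1)) := by
    have hsq : (∏ i ∈ range s, ((m - s + 1) * (a + 1 + i))) *
          (∏ i ∈ range s, ((m - s + 1) * (a + 1 + i))) ≤
        (∏ i ∈ range s, ((m - i) * (a + 1))) * (∏ i ∈ range s, ((m - i) * (a + 1))) := by
      rw [hX2, hY2]
      apply prod_le_prod
      · intro i _; positivity
      · intro i hi
        rw [mem_range] at hi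
        have h := pointwise_pair (m - s + 1) (a + 1) (s - 1 - i) i (by omega)
        have h2 : m - s + 1 + (s - 1 - i) ≤ m - i := by omega
        calc (m - s + 1) * (m - s + 1) * ((a + 1 + (s - 1 - i)) * (a + 1 + i))
            = (m - s + 1) ^ 2 * ((a + 1 + (s - 1 - i)) * (a + 1 + i)) := by ring
          _ ≤ (m - s + 1 + i) * (m - s + 1 + (s - 1 - i)) * (a + 1) ^ 2 := h
          _ ≤ (m - s + 1 + i) * (m - i) * (a + 1) ^ 2 :=
              Nat.mul_le_mul_right _ (Nat.mul_le_mul_left _ h2)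
          _ = (m - s + 1 + i) * (m - i) * ((a + 1) * (a + 1)) := by ring
    exact nonneg_le_nonneg_of_sq_le_sq (Nat.zero_le _) hsq
  -- split the constant products
  have hXsplit : (∏ i ∈ range s, ((m - i) * (a + 1))) =
      (∏ i ∈ range s, (m - i)) * (a + 1) ^ s := by
    rw [prod_mul_distrib, prod_const, card_range]
  have hYsplit : (∏ i ∈ range s, ((m - s + 1) * (a + 1 + i))) =
      (m - s + 1) ^ s * ∏ i ∈ range s, (a + 1 + i) := by
    rw [prod_mul_distrib, prod_const, card_range]
  have hQpos : 0 < ∏ i ∈ range s, (a + 1 + i) := by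
    apply prod_pos; intro i _; omega
  have hmain : N.choose m * (m - s + 1) ^ s * ∏ i ∈ range s, (a + 1 + i) ≤
      N.choose (m - s) * (a + 1) ^ s * ∏ i ∈ range s, (a + 1 + i) := by
    calc N.choose m * (m - s + 1) ^ s * ∏ i ∈ range s, (a + 1 + i)
        = N.choose m * ((m - s + 1) ^ s * ∏ i ∈ range s, (a + 1 + i)) := by ring
      _ = N.choose m * ∏ i ∈ range s, ((m - s + 1) * (a + 1 + i)) := by rw [hYsplit]
      _ ≤ N.choose m * ∏ i ∈ range s, ((m - i) * (a + 1)) := Nat.mul_le_mul_left _ hYX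
      _ = N.choose m * (∏ i ∈ range s, (m - i)) * (a + 1) ^ s := by rw [hXsplit]; ring
      _ = N.choose (m - s) * (∏ i ∈ range s, (a + 1 + i)) * (a + 1) ^ s := by rw [hid]
      _ = N.choose (m - s) * (a + 1) ^ s * ∏ i ∈ range s, (a + 1 + i) := by ring
  exact Nat.le_of_mul_le_mul_right hmain hQpos

/-- For `k, t ∈ ℕ` with `2t - 1 ≥ 1` and `⌊k/2⌋ - 2t + 1 ≥ 0`,
`C(k, ⌊k/2⌋ - 2t + 1) ≥ C(k, ⌊k/2⌋) · ((⌊k/2⌋ - 2t + 2)/(⌈k/2⌉ + 1))^{2t-1}`. -/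
theorem binom_shift_lower_bound (k t : ℕ) (ht : 1 ≤ 2 * t - 1) (hkt : 2 * t - 1 ≤ k / 2) :
    (k.choose (k / 2 - (2 * t - 1)) : ℝ) ≥
      (k.choose (k / 2) : ℝ) *
        ((((k / 2 : ℕ) : ℝ) - 2 * (t : ℝ) + 2) / ((((k + 1) / 2 : ℕ) : ℝ) + 1)) ^ (2 * t - 1) := by
  obtain ⟨t', rfl⟩ : ∃ t', t = t' + 1 := ⟨t - 1, by omega⟩
  set m := k / 2 with hm
  set a := (k + 1) / 2 with ha
  have hs : 2 * (t' + 1) - 1 = 2 * t' + 1 := by omega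
  set s := 2 * t' + 1 with hsdef
  rw [hs] at hkt ⊢
  have hNa : m + a = k := by omega
  have hma : m ≤ a := by omega
  have key := key_choose_ineq k m s a hNa hma (by omega) hkt
  have hnum : ((m : ℝ) - 2 * ((t' : ℝ) + 1) + 2) = ((m - s + 1 : ℕ) : ℝ) := by
    have : s ≤ m := hkt
    push_cast [this]
    rw [hsdef]; push_cast
    ring
  rw [ge_iff_le, show ((t' + 1 : ℕ) : ℝ) = (t' : ℝ) + 1 from by push_cast; ring, hnum]
  have hden : (((a : ℕ) : ℝ) + 1) = ((a + 1 : ℕ) : ℝ) := by push_cast; ring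
  rw [hden, div_pow, ← mul_div_assoc, div_le_iff₀ (by positivity)]
  exact_mod_cast key
end

section
/- Let Z_1, …, Z_k be i.i.d. Rademacher random variables and X := Σ_{i=1}^k Z_i. Let ε > 0, set k' := ⌊ε⌋ + 1, and assume k' ≤ k. Then for every a ∈ ℝ, P( |X - a| > ε ) ≥ 2^{-k} · [ Σ_{j=0}^{⌊(k - k')/2⌋} C(k,j) + Σ_{j=⌈(k + k' + 1)/2⌉}^{k} C(k,j) ]. -/
open MeasureTheory ProbabilityTheory

private lemma choose_mono_half (n : ℕ) : ∀ {a c : ℕ}, a ≤ c → c ≤ n / 2 →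
    n.choose a ≤ n.choose c := by
  intro a c h1
  induction c, h1 using Nat.le_induction with
  | base => intro _; exact le_rfl
  | succ c hc ih =>
    intro h2
    exact (ih (by omega)).trans (Nat.choose_le_succ_of_lt_half_left (by omega))

private lemma choose_le_choose_of_add_le {k a b : ℕ} (hab : a ≤ b) (h : a + b ≤ k) :
    k.choose a ≤ k.choose b := by
  rcases le_or_gt (2 * b) k with hb | hb
  · exact choose_mono_half k hab (by omega)
  · have hbk : b ≤ k := by omega
    rw [← Nat.choose_symm hbk]
    exact choose_mono_half k (by omega) (by omega)

private lemma choose_le_choose_of_lt_add {k a b : ℕ} (hab : a ≤ b) (h : k < a + b) :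
    k.choose b ≤ k.choose a := by
  rcases le_or_gt b k with hbk | hbk
  · rw [← Nat.choose_symm hbk]
    exact choose_le_choose_of_add_le (by omega) (by omega)
  · simp [Nat.choose_eq_zero_of_lt hbk]

/-- sum of `k'` consecutive binomial coefficients starting at `m`. -/
private def iSum (k k' m : ℕ) : ℕ := ∑ j ∈ Finset.Ico m (m + k'), Nat.choose k j

private lemma iSum_split (k k' m : ℕ) (hk1 : 1 ≤ k') :
    iSum k k' m = k.choose m + ∑ j ∈ Finset.Ico (m + 1) (m + k'), k.choose j := by
  rw [iSum, Finset.sum_eq_sum_Ico_succ_bot (by omega)]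

private lemma iSum_split' (k k' m : ℕ) (hk1 : 1 ≤ k') :
    iSum k k' (m + 1) = (∑ j ∈ Finset.Ico (m + 1) (m + k'), k.choose j) + k.choose (m + k') := by
  rw [iSum]
  have : m + 1 + k' = (m + k') + 1 := by omega
  rw [this, Finset.sum_Ico_succ_top (by omega)]

private lemma iSum_le_max (k k' : ℕ) (hk1 : 1 ≤ k') (hkk : k' ≤ k) (m : ℕ) :
    iSum k k' m ≤ iSum k k' ((k - k') / 2 + 1) := by
  set L := (k - k') / 2 + 1 with hL
  have hup : ∀ m, m + 1 ≤ L → iSum k k' m ≤ iSum k k' (m + 1) := by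
    intro m hm
    rw [iSum_split k k' m hk1, iSum_split' k k' m hk1]
    have : k.choose m ≤ k.choose (m + k') :=
      choose_le_choose_of_add_le (by omega) (by omega)
    omega
  have hdown : ∀ m, L ≤ m → iSum k k' (m + 1) ≤ iSum k k' m := by
    intro m hm
    rw [iSum_split k k' m hk1, iSum_split' k k' m hk1]
    have : k.choose (m + k') ≤ k.choose m :=
      choose_le_choose_of_lt_add (by omega) (by omega)
    omega
  rcases le_or_gt m L with h | h
  · have : ∀ d, iSum k k' (L - d) ≤ iSum k k' L := by
      intro d
      induction d with
      | zero => simp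
      | succ d ih =>
        rcases le_or_gt L d with h2 | h2
        · have : L - (d + 1) = L - d := by omega
          rw [this]; exact ih
        · have h3 : L - (d + 1) + 1 = L - d := by omega
          have := hup (L - (d + 1)) (by omega)
          rw [h3] at this
          exact this.trans ih
    have h4 := this (L - m)
    have h5 : L - (L - m) = m := by omega
    rwa [h5] at h4
  · have : ∀ d, iSum k k' (L + d) ≤ iSum k k' L := by
      intro d
      induction d with
      | zero => simp
      | succ d ih =>
        have : L + (d + 1) = (L + d) + 1 := by omega
        rw [this]
        exact (hdown (L + d) (by omega)).trans ih
    have h4 := this (m - L)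
    have h5 : L + (m - L) = m := by omega
    rwa [h5] at h4

/-- For i.i.d. Rademacher variables `Z_1,…,Z_k`, `X := Σ Z_i`, `ε > 0`,
`k' := ⌊ε⌋ + 1 ≤ k`, and any `a ∈ ℝ`:
`P(|X - a| > ε) ≥ 2^{-k}·[Σ_{j=0}^{⌊(k-k')/2⌋} C(k,j) + Σ_{j=⌈(k+k'+1)/2⌉}^k C(k,j)]`. -/
theorem rademacher_sum_anticoncentration_binom {Ω : Type*} [MeasurableSpace Ω]
    (μ : Measure Ω) [IsProbabilityMeasure μ]
    (k : ℕ) (Z : Fin k → Ω → ℝ) (hmeas : ∀ i, Measurable (Z i))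
    (hindep : iIndepFun Z μ)
    (hpos : ∀ i, μ {ω | Z i ω = 1} = 1 / 2)
    (hneg : ∀ i, μ {ω | Z i ω = -1} = 1 / 2)
    (ε : ℝ) (hε : 0 < ε) (hk' : ⌊ε⌋₊ + 1 ≤ k) (a : ℝ) :
    μ {ω | |(∑ i, Z i ω) - a| > ε} ≥
      ENNReal.ofReal ((2 : ℝ)⁻¹ ^ k *
        ((∑ j ∈ Finset.range ((k - (⌊ε⌋₊ + 1)) / 2 + 1), (k.choose j : ℝ)) +
          ∑ j ∈ Finset.Icc ((k + (⌊ε⌋₊ + 1) + 2) / 2) k, (k.choose j : ℝ))) := by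
  classical
  set k' : ℕ := ⌊ε⌋₊ + 1 with hk'def
  set D : ℕ := (k - k') / 2 with hD
  set U : ℕ := (k + k' + 2) / 2 with hU
  -- the events
  set A : Finset (Fin k) → Set Ω :=
    fun S => ⋂ i, Z i ⁻¹' {if i ∈ S then (1 : ℝ) else -1} with hA
  have hAmeas : ∀ S, MeasurableSet (A S) := fun S =>
    MeasurableSet.iInter fun i => (hmeas i) (measurableSet_singleton _)
  have hAμ : ∀ S, μ (A S) = (2 : ENNReal)⁻¹ ^ k := by
    intro S
    rw [hA]
    rw [hindep.meas_iInter
      (fun i => ⟨({if i ∈ S then (1 : ℝ) else -1} : Set ℝ), measurableSet_singleton _, rfl⟩)]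
    have hfac : ∀ i : Fin k, μ (Z i ⁻¹' {if i ∈ S then (1 : ℝ) else -1}) = 2⁻¹ := by
      intro i
      by_cases h : i ∈ S
      · simp only [h, if_true]
        have : Z i ⁻¹' {(1 : ℝ)} = {ω | Z i ω = 1} := rfl
        rw [this, hpos i, one_div]
      · simp only [h, if_false]
        have : Z i ⁻¹' {(-1 : ℝ)} = {ω | Z i ω = -1} := rfl
        rw [this, hneg i, one_div]
    simp [hfac]
  -- the good family
  set 𝒮 : Finset (Finset (Fin k)) :=
    Finset.univ.filter (fun S => ε < |2 * (S.card : ℝ) - k - a|) with h𝒮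
  have hdisj : Set.PairwiseDisjoint (↑𝒮) A := by
    intro S _ T _ hST
    have hex : ∃ i, ¬ ((i ∈ S) ↔ (i ∈ T)) := by
      by_contra hcon
      push_neg at hcon
      exact hST (Finset.ext fun i => (hcon i))
    obtain ⟨i, hi⟩ := hex
    rw [Function.onFun, Set.disjoint_left]
    intro ω hωS hωT
    simp only [hA, Set.mem_iInter, Set.mem_preimage, Set.mem_singleton_iff] at hωS hωT
    have h1 := hωS i
    have h2 := hωT i
    by_cases hS : i ∈ S <;> by_cases hT : i ∈ T
    · exact hi ⟨fun _ => hT, fun _ => hS⟩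
    · rw [if_pos hS] at h1; rw [if_neg hT] at h2; norm_num [h1] at h2
    · rw [if_neg hS] at h1; rw [if_pos hT] at h2; norm_num [h1] at h2
    · exact hi ⟨fun h => absurd h hS, fun h => absurd h hT⟩
  have hsumA : ∀ S : Finset (Fin k), ∀ ω ∈ A S, ∑ i, Z i ω = 2 * S.card - k := by
    intro S ω hω
    simp only [hA, Set.mem_iInter, Set.mem_preimage, Set.mem_singleton_iff] at hω
    calc ∑ i, Z i ω = ∑ i : Fin k, (if i ∈ S then (1 : ℝ) else -1) :=
          Finset.sum_congr rfl (fun i _ => hω i)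
      _ = ∑ i : Fin k, ((if i ∈ S then (2 : ℝ) else 0) - 1) := by
          refine Finset.sum_congr rfl (fun i _ => ?_)
          split <;> norm_num
      _ = (∑ i : Fin k, (if i ∈ S then (2 : ℝ) else 0)) - k := by
          rw [Finset.sum_sub_distrib, Finset.sum_const, Finset.card_univ, Fintype.card_fin]
          simp
      _ = 2 * S.card - k := by
          rw [Finset.sum_ite_mem, Finset.univ_inter, Finset.sum_const, nsmul_eq_mul, mul_comm]
  have hsub : (⋃ S ∈ 𝒮, A S) ⊆ {ω | |(∑ i, Z i ω) - a| > ε} := by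
    intro ω hω
    simp only [Set.mem_iUnion] at hω
    obtain ⟨S, hS, hωS⟩ := hω
    have hP : ε < |2 * (S.card : ℝ) - k - a| := by
      rw [h𝒮] at hS
      exact (Finset.mem_filter.mp hS).2
    have hs := hsumA S ω hωS
    show ε < |(∑ i, Z i ω) - a|
    rw [hs]
    exact hP
  -- measure of the union
  have hμU : μ (⋃ S ∈ 𝒮, A S) = (𝒮.card : ENNReal) * (2 : ENNReal)⁻¹ ^ k := by
    rw [measure_biUnion_finset hdisj (fun S _ => hAmeas S)]
    simp [hAμ, Finset.sum_const, nsmul_eq_mul]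
  -- count the good family fiberwise over the number of +1's
  set G : Finset ℕ :=
    (Finset.range (k + 1)).filter (fun j => ε < |2 * (j : ℝ) - k - a|) with hG
  have hcard : 𝒮.card = ∑ j ∈ G, k.choose j := by
    rw [Finset.card_eq_sum_card_fiberwise (f := fun S => S.card) (t := G) ?goodmem]
    case goodmem =>
      intro S hS
      rw [h𝒮, Finset.mem_coe] at hS
      rw [hG, Finset.mem_coe, Finset.mem_filter, Finset.mem_range]
      refine ⟨?_, (Finset.mem_filter.mp hS).2⟩
      have h5 : S.card ≤ k := by simpa using Finset.card_le_univ S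
      exact Nat.lt_succ_of_le h5
    refine Finset.sum_congr rfl (fun j hj => ?_)
    have hjP : ε < |2 * (j : ℝ) - k - a| := by
      rw [hG] at hj
      exact (Finset.mem_filter.mp hj).2
    have hfib : 𝒮.filter (fun S => S.card = j) =
        Finset.univ.filter (fun S : Finset (Fin k) => S.card = j) := by
      ext S
      simp only [h𝒮, Finset.mem_filter, Finset.mem_univ, true_and]
      constructor
      · rintro ⟨_, h⟩; exact h
      · rintro h; exact ⟨by rw [h]; exact hjP, h⟩
    rw [hfib, ← Finset.powerset_univ, ← Finset.powersetCard_eq_filter,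
      Finset.card_powersetCard, Finset.card_univ, Fintype.card_fin]
  -- the bad set is covered by an interval of k' consecutive integers
  set B : Finset ℕ :=
    (Finset.range (k + 1)).filter (fun j => ¬ ε < |2 * (j : ℝ) - k - a|) with hB
  have hBsum : ∑ j ∈ B, k.choose j ≤ iSum k k' (D + 1) := by
    rcases B.eq_empty_or_nonempty with hBe | hBne
    · rw [hBe]; simp
    · set b : ℕ := B.min' hBne with hb
      have hbB : b ∈ B := B.min'_mem hBne
      have hbabs : |2 * (b : ℝ) - k - a| ≤ ε := by
        rw [hB] at hbB
        have := (Finset.mem_filter.mp hbB).2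
        linarith [not_lt.mp this]
      have hBsub : B ⊆ Finset.Ico b (b + k') := by
        intro j hj
        have hjb : b ≤ j := B.min'_le j hj
        have hjabs : |2 * (j : ℝ) - k - a| ≤ ε := by
          rw [hB] at hj
          have := (Finset.mem_filter.mp hj).2
          linarith [not_lt.mp this]
        have h1 : 2 * (j : ℝ) - k - a ≤ ε := (abs_le.mp hjabs).1 |> fun _ => (abs_le.mp hjabs).2
        have h2 : -ε ≤ 2 * (b : ℝ) - k - a := (abs_le.mp hbabs).1
        have hdiff : ((j - b : ℕ) : ℝ) ≤ ε := by
          rw [Nat.cast_sub hjb]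
          linarith
        have : j - b ≤ ⌊ε⌋₊ := Nat.le_floor hdiff
        rw [Finset.mem_Ico]
        constructor
        · exact hjb
        · rw [hk'def]; omega
      calc ∑ j ∈ B, k.choose j ≤ ∑ j ∈ Finset.Ico b (b + k'), k.choose j :=
            Finset.sum_le_sum_of_subset hBsub
        _ = iSum k k' b := rfl
        _ ≤ iSum k k' (D + 1) := by
            rw [hD]
            exact iSum_le_max k k' (by omega) (by omega) b
  -- tails + middle = 2^k
  have hU_eq : U = D + 1 + k' := by rw [hU, hD]; omega
  have hU_le : U ≤ k + 1 := by rw [hU]; omega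
  have htot : (∑ j ∈ Finset.range (D + 1), k.choose j) + iSum k k' (D + 1)
      + (∑ j ∈ Finset.Icc U k, k.choose j) = 2 ^ k := by
    have h1 : Finset.range (D + 1) = Finset.Ico 0 (D + 1) := by
      rw [Finset.range_eq_Ico]
    have h2 : Finset.Icc U k = Finset.Ico U (k + 1) := by
      rw [Finset.Ico_add_one_right_eq_Icc]
    rw [h1, h2, iSum, hU_eq]
    rw [Finset.sum_Ico_consecutive _ (by omega) (by omega : D + 1 ≤ D + 1 + k'),
      Finset.sum_Ico_consecutive _ (by omega) (by omega : D + 1 + k' ≤ k + 1)]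
    rw [← Finset.range_eq_Ico]
    exact Nat.sum_range_choose k
  -- good sum dominates the tails
  have hGB : (∑ j ∈ G, k.choose j) + (∑ j ∈ B, k.choose j) = 2 ^ k := by
    rw [hG, hB]
    rw [Finset.sum_filter_add_sum_filter_not]
    exact Nat.sum_range_choose k
  have hmain : (∑ j ∈ Finset.range (D + 1), k.choose j)
      + (∑ j ∈ Finset.Icc U k, k.choose j) ≤ ∑ j ∈ G, k.choose j := by omega
  -- put everything together
  have hchain : ((((∑ j ∈ Finset.range (D + 1), k.choose j)
      + ∑ j ∈ Finset.Icc U k, k.choose j : ℕ)) : ENNReal) * (2 : ENNReal)⁻¹ ^ k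
      ≤ μ {ω | |(∑ i, Z i ω) - a| > ε} := by
    calc ((((∑ j ∈ Finset.range (D + 1), k.choose j)
        + ∑ j ∈ Finset.Icc U k, k.choose j : ℕ)) : ENNReal) * (2 : ENNReal)⁻¹ ^ k
        ≤ ((∑ j ∈ G, k.choose j : ℕ) : ENNReal) * (2 : ENNReal)⁻¹ ^ k := by
          exact mul_le_mul_left (by exact_mod_cast hmain) _
      _ = (𝒮.card : ENNReal) * (2 : ENNReal)⁻¹ ^ k := by rw [hcard]
      _ = μ (⋃ S ∈ 𝒮, A S) := hμU.symm
      _ ≤ μ {ω | |(∑ i, Z i ω) - a| > ε} := measure_mono hsub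
  refine le_trans (le_of_eq ?_) hchain
  rw [ENNReal.ofReal_mul (by positivity)]
  have hofr : ENNReal.ofReal ((2 : ℝ)⁻¹ ^ k) = (2 : ENNReal)⁻¹ ^ k := by
    rw [ENNReal.ofReal_pow (by norm_num), ENNReal.ofReal_inv_of_pos (by norm_num)]
    norm_num
  rw [hofr]
  have hcastsum : (∑ j ∈ Finset.range ((k - k') / 2 + 1), (k.choose j : ℝ))
      + ∑ j ∈ Finset.Icc ((k + k' + 2) / 2) k, (k.choose j : ℝ)
      = ((((∑ j ∈ Finset.range (D + 1), k.choose j)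
        + ∑ j ∈ Finset.Icc U k, k.choose j : ℕ)) : ℝ) := by
    rw [hD, hU]
    push_cast
    ring
  rw [hcastsum, ENNReal.ofReal_natCast, mul_comm]
end

section
/- Let Z_1, …, Z_k be i.i.d. Rademacher random variables and X := Σ_{i=1}^k Z_i. Let ε > 0, set k' := ⌊ε⌋ + 1, and assume k' ≤ k. Then for every a ∈ ℝ, P( |X - a| > ε ) ≥ 2^{-k'}. -/
open MeasureTheory ProbabilityTheory

/-- For i.i.d. Rademacher variables `Z_1,…,Z_k`, `X := Σ Z_i`, `ε > 0`,
`k' := ⌊ε⌋ + 1 ≤ k`, and every `a ∈ ℝ`: `P(|X - a| > ε) ≥ 2^{-k'}`. -/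
theorem rademacher_sum_anticoncentration_simple {Ω : Type*} [MeasurableSpace Ω]
    (μ : Measure Ω) [IsProbabilityMeasure μ]
    (k : ℕ) (Z : Fin k → Ω → ℝ) (hmeas : ∀ i, Measurable (Z i))
    (hindep : iIndepFun Z μ)
    (hpos : ∀ i, μ {ω | Z i ω = 1} = 1 / 2)
    (hneg : ∀ i, μ {ω | Z i ω = -1} = 1 / 2)
    (ε : ℝ) (hε : 0 < ε) (hk' : ⌊ε⌋₊ + 1 ≤ k) (a : ℝ) :
    μ {ω | |(∑ i, Z i ω) - a| > ε} ≥ ENNReal.ofReal ((2 : ℝ)⁻¹ ^ (⌊ε⌋₊ + 1)) := by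
  set n : ℕ := ⌊ε⌋₊ + 1 with hn
  set S : Finset (Fin k) := Finset.univ.filter (fun i => (i : ℕ) < n) with hS
  have hScard : S.card = n := by
    have hSmap : S = Finset.map (Fin.castLEEmb hk') Finset.univ := by
      ext i
      simp only [hS, Finset.mem_filter, Finset.mem_univ, true_and, Finset.mem_map,
        Fin.castLEEmb]
      constructor
      · intro h
        exact ⟨⟨i, h⟩, rfl⟩
      · rintro ⟨j, rfl⟩
        exact j.isLt
    rw [hSmap, Finset.card_map, Finset.card_univ, Fintype.card_fin]
  have hεn : ε < (n : ℝ) := by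
    push_cast
    simpa [hn] using Nat.lt_floor_add_one ε
  -- events
  set Ap : Set Ω := {ω | ∀ i ∈ S, Z i ω = 1} with hAp
  set Am : Set Ω := {ω | ∀ i ∈ S, Z i ω = -1} with hAm
  set B : Set Ω := {ω | a ≤ ∑ i ∈ Sᶜ, Z i ω} with hB
  have hBmeas : MeasurableSet B := by
    apply measurableSet_le measurable_const
    exact Finset.measurable_sum _ (fun i _ => hmeas i)
  have hApmeas : MeasurableSet Ap := by
    have : Ap = ⋂ i ∈ S, Z i ⁻¹' {1} := by ext ω; simp [hAp]
    rw [this]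
    exact MeasurableSet.biInter (Finset.countable_toSet S)
      (fun i _ => (hmeas i) (measurableSet_singleton 1))
  have hAmmeas : MeasurableSet Am := by
    have : Am = ⋂ i ∈ S, Z i ⁻¹' {-1} := by ext ω; simp [hAm]
    rw [this]
    exact MeasurableSet.biInter (Finset.countable_toSet S)
      (fun i _ => (hmeas i) (measurableSet_singleton (-1)))
  -- measure of Ap and Am
  have hApmeasure : μ Ap = (2 : ENNReal)⁻¹ ^ n := by
    have hsets : ∀ i, i ∈ S → MeasurableSet ({1} : Set ℝ) :=
      fun i _ => measurableSet_singleton 1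
    have := hindep.measure_inter_preimage_eq_mul S (sets := fun _ => ({1} : Set ℝ)) hsets
    have hApeq : Ap = ⋂ i ∈ S, Z i ⁻¹' {1} := by ext ω; simp [hAp]
    rw [hApeq, this]
    have : ∀ i ∈ S, μ (Z i ⁻¹' {1}) = (2 : ENNReal)⁻¹ := by
      intro i _
      have := hpos i
      rw [one_div] at this
      exact this
    rw [Finset.prod_congr rfl this, Finset.prod_const, hScard]
  have hAmmeasure : μ Am = (2 : ENNReal)⁻¹ ^ n := by
    have hsets : ∀ i, i ∈ S → MeasurableSet ({-1} : Set ℝ) :=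
      fun i _ => measurableSet_singleton (-1)
    have := hindep.measure_inter_preimage_eq_mul S (sets := fun _ => ({-1} : Set ℝ)) hsets
    have hAmeq : Am = ⋂ i ∈ S, Z i ⁻¹' {-1} := by ext ω; simp [hAm]
    rw [hAmeq, this]
    have : ∀ i ∈ S, μ (Z i ⁻¹' {-1}) = (2 : ENNReal)⁻¹ := by
      intro i _
      have := hneg i
      rw [one_div] at this
      exact this
    rw [Finset.prod_congr rfl this, Finset.prod_const, hScard]
  -- independence
  have hIF : IndepFun (fun ω (i : S) => Z i ω) (fun ω (i : (Sᶜ : Finset (Fin k))) => Z i ω) μ :=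
    hindep.indepFun_finset S Sᶜ disjoint_compl_right hmeas
  have hprodA : ∀ (c : ℝ), μ ({ω | ∀ i ∈ S, Z i ω = c} ∩ B)
      = μ {ω | ∀ i ∈ S, Z i ω = c} * μ B := by
    intro c
    have h1 : {ω | ∀ i ∈ S, Z i ω = c}
        = (fun ω (i : S) => Z i ω) ⁻¹' (Set.univ.pi fun _ => ({c} : Set ℝ)) := by
      ext ω; simp [Set.mem_pi]
    have h2 : B = (fun ω (i : (Sᶜ : Finset (Fin k))) => Z i ω) ⁻¹'
        {x : (Sᶜ : Finset (Fin k)) → ℝ | a ≤ ∑ i, x i} := by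
      ext ω
      simp only [hB, Set.mem_setOf_eq, Set.mem_preimage]
      rw [← Finset.sum_coe_sort Sᶜ (fun i => Z i ω)]
    rw [h1, h2]
    exact hIF.measure_inter_preimage_eq_mul _ _
      (MeasurableSet.univ_pi fun _ => measurableSet_singleton c)
      (measurableSet_le measurable_const (Finset.measurable_sum _ (fun i _ => measurable_pi_apply i)))
  have hprodA' : ∀ (c : ℝ), μ ({ω | ∀ i ∈ S, Z i ω = c} ∩ Bᶜ)
      = μ {ω | ∀ i ∈ S, Z i ω = c} * μ Bᶜ := by
    intro c
    have h1 : {ω | ∀ i ∈ S, Z i ω = c}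
        = (fun ω (i : S) => Z i ω) ⁻¹' (Set.univ.pi fun _ => ({c} : Set ℝ)) := by
      ext ω; simp [Set.mem_pi]
    have h2 : Bᶜ = (fun ω (i : (Sᶜ : Finset (Fin k))) => Z i ω) ⁻¹'
        {x : (Sᶜ : Finset (Fin k)) → ℝ | ¬ a ≤ ∑ i, x i} := by
      ext ω
      simp only [hB, Set.mem_compl_iff, Set.mem_setOf_eq, Set.mem_preimage]
      rw [← Finset.sum_coe_sort Sᶜ (fun i => Z i ω)]
    rw [h1, h2]
    refine hIF.measure_inter_preimage_eq_mul _ _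
      (MeasurableSet.univ_pi fun _ => measurableSet_singleton c) ?_
    exact (measurableSet_le measurable_const
      (Finset.measurable_sum _ (fun i _ => measurable_pi_apply i))).compl
  -- inclusion
  have hsub : (Ap ∩ B) ∪ (Am ∩ Bᶜ) ⊆ {ω | |(∑ i, Z i ω) - a| > ε} := by
    rintro ω (⟨h1, h2⟩ | ⟨h1, h2⟩)
    · have hsum : (∑ i, Z i ω) = (n : ℝ) + ∑ i ∈ Sᶜ, Z i ω := by
        rw [← Finset.sum_add_sum_compl S (fun i => Z i ω)]
        congr 1
        rw [Finset.sum_congr rfl h1, Finset.sum_const, hScard]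
        simp
      have hTa : a ≤ ∑ i ∈ Sᶜ, Z i ω := h2
      have : ε < (∑ i, Z i ω) - a := by
        rw [hsum]; linarith
      simp only [Set.mem_setOf_eq]
      calc ε < (∑ i, Z i ω) - a := this
        _ ≤ |(∑ i, Z i ω) - a| := le_abs_self _
    · have hsum : (∑ i, Z i ω) = -(n : ℝ) + ∑ i ∈ Sᶜ, Z i ω := by
        rw [← Finset.sum_add_sum_compl S (fun i => Z i ω)]
        congr 1
        rw [Finset.sum_congr rfl h1, Finset.sum_const, hScard]
        simp
      have hTa : ∑ i ∈ Sᶜ, Z i ω < a := lt_of_not_ge h2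
      have : ε < -((∑ i, Z i ω) - a) := by
        rw [hsum]; linarith
      simp only [Set.mem_setOf_eq]
      calc ε < -((∑ i, Z i ω) - a) := this
        _ ≤ |(∑ i, Z i ω) - a| := neg_le_abs _
  -- put together
  have hdisj : Disjoint (Ap ∩ B) (Am ∩ Bᶜ) :=
    (disjoint_compl_right.mono Set.inter_subset_right Set.inter_subset_right)
  have key : μ ((Ap ∩ B) ∪ (Am ∩ Bᶜ)) = (2 : ENNReal)⁻¹ ^ n := by
    rw [measure_union hdisj (hAmmeas.inter hBmeas.compl)]
    rw [hprodA 1, hprodA' (-1)]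
    have e1 : {ω | ∀ i ∈ S, Z i ω = (1:ℝ)} = Ap := rfl
    have e2 : {ω | ∀ i ∈ S, Z i ω = (-1:ℝ)} = Am := rfl
    rw [e1, e2, hApmeasure, hAmmeasure, ← mul_add, measure_add_measure_compl hBmeas, measure_univ, mul_one]
  calc ENNReal.ofReal ((2 : ℝ)⁻¹ ^ n) = (2 : ENNReal)⁻¹ ^ n := by
        rw [ENNReal.ofReal_pow (by norm_num), ENNReal.ofReal_inv_of_pos (by norm_num),
          ENNReal.ofReal_ofNat]
    _ = μ ((Ap ∩ B) ∪ (Am ∩ Bᶜ)) := key.symm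
    _ ≤ μ {ω | |(∑ i, Z i ω) - a| > ε} := measure_mono hsub
end

section
/- Let N, M, n be natural numbers with M ≤ N and N ≥ 4n. Then the number of M-element subsets I of {1, …, N} satisfying #(I ∩ {1, …, n}) ≤ M/2 is at least (1/2)·C(N, M). Equivalently, if I is a uniformly random M-element subset of {1, …, N}, then P( #(I ∩ {1, …, n}) ≤ M/2 ) ≥ 1/2. -/
/-- For `M ≤ N` and `N ≥ 4n`, the number of `M`-element subsets `I` of `{1,…,N}`
with `#(I ∩ {1,…,n}) ≤ M/2` is at least `(1/2)·C(N,M)`. -/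
theorem hypergeometric_median_bound (N M n : ℕ) (hMN : M ≤ N) (hN : 4 * n ≤ N) :
    (N.choose M : ℝ) / 2 ≤
      (((Finset.Icc 1 N).powersetCard M).filter
        (fun I => ((I ∩ Finset.Icc 1 n).card : ℝ) ≤ (M : ℝ) / 2)).card := by
  classical
  set σ : ℕ → ℕ := fun x => if 1 ≤ x ∧ x ≤ n then x + n
    else if n + 1 ≤ x ∧ x ≤ 2 * n then x - n else x with hσdef
  have hσinj : Function.Injective σ := by
    intro a b hab
    simp only [hσdef] at hab
    split_ifs at hab <;> omega
  set s := (Finset.Icc 1 N).powersetCard M with hs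
  set P : Finset ℕ → Prop := fun I => ((I ∩ Finset.Icc 1 n).card : ℝ) ≤ (M : ℝ) / 2
    with hP
  -- key: bad sets inject into good sets
  have key : (s.filter (fun I => ¬ P I)).card ≤ (s.filter P).card := by
    apply Finset.card_le_card_of_injOn (fun I => I.image σ)
    · intro I hI
      simp only [Finset.mem_coe, Finset.mem_filter, hs, Finset.mem_powersetCard] at hI
      obtain ⟨⟨hIsub, hIcard⟩, hbad⟩ := hI
      have hcardim : (I.image σ).card = M := by
        rw [Finset.card_image_of_injective _ hσinj, hIcard]
      -- intersection identity
      have hint : (I.image σ) ∩ Finset.Icc 1 n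
          = (I ∩ Finset.Icc (n+1) (2*n)).image σ := by
        ext x
        simp only [Finset.mem_inter, Finset.mem_image, Finset.mem_Icc]
        constructor
        · rintro ⟨⟨y, hyI, rfl⟩, hx⟩
          refine ⟨y, ⟨hyI, ?_⟩, rfl⟩
          simp only [hσdef] at hx ⊢
          split_ifs at hx <;> omega
        · rintro ⟨y, ⟨hyI, hy⟩, rfl⟩
          refine ⟨⟨y, hyI, rfl⟩, ?_⟩
          simp only [hσdef]
          split_ifs <;> omega
      -- the two intersections are disjoint pieces of I
      have hsum : (I ∩ Finset.Icc 1 n).card + (I ∩ Finset.Icc (n+1) (2*n)).card ≤ M := by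
        have hdisj : Disjoint (I ∩ Finset.Icc 1 n) (I ∩ Finset.Icc (n+1) (2*n)) := by
          apply Finset.disjoint_left.mpr
          intro a ha hb
          simp only [Finset.mem_inter, Finset.mem_Icc] at ha hb
          omega
        calc (I ∩ Finset.Icc 1 n).card + (I ∩ Finset.Icc (n+1) (2*n)).card
            = ((I ∩ Finset.Icc 1 n) ∪ (I ∩ Finset.Icc (n+1) (2*n))).card :=
              (Finset.card_union_of_disjoint hdisj).symm
          _ ≤ I.card := Finset.card_le_card (by
              intro a ha
              rcases Finset.mem_union.mp ha with h | h <;>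
                exact (Finset.mem_inter.mp h).1)
          _ = M := hIcard
      simp only [Finset.mem_coe, Finset.mem_filter, hs, Finset.mem_powersetCard]
      refine ⟨⟨?_, hcardim⟩, ?_⟩
      · intro x hx
        obtain ⟨y, hyI, rfl⟩ := Finset.mem_image.mp hx
        have := hIsub hyI
        simp only [Finset.mem_Icc] at this ⊢
        simp only [hσdef]
        split_ifs <;> omega
      · simp only [hP] at hbad ⊢
        push_neg at hbad
        rw [hint, Finset.card_image_of_injective _ hσinj]
        have h1 : (M : ℝ) / 2 < ((I ∩ Finset.Icc 1 n).card : ℝ) := hbad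
        have h2 : ((I ∩ Finset.Icc 1 n).card : ℝ) + ((I ∩ Finset.Icc (n+1) (2*n)).card : ℝ)
            ≤ (M : ℝ) := by exact_mod_cast hsum
        linarith
    · intro a ha b hb hab
      exact Finset.image_injective hσinj hab
  have htotal : (s.filter P).card + (s.filter (fun I => ¬ P I)).card = s.card :=
    Finset.card_filter_add_card_filter_not _
  have hscard : s.card = N.choose M := by
    rw [hs, Finset.card_powersetCard, Nat.card_Icc]
    simp
  have h2 : N.choose M ≤ 2 * (s.filter P).card := by omega
  have : (N.choose M : ℝ) ≤ 2 * ((s.filter P).card : ℝ) := by exact_mod_cast h2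
  linarith
end

section
/- Let d ∈ ℕ, β ∈ (0,1], and let φ : ℝ^d → ℝ satisfy φ(x) = 0 for x ∉ [0,1]^d and |φ(x) - φ(z)| ≤ |x - z|_∞^β for all x, z ∈ ℝ^d. Let m ∈ ℕ, m ≥ 1, and let signs s_i ∈ {−1, +1} be given for each multi-index i ∈ {0, …, m−1}^d. Define f(x) := (1/2)·m^{-β} · Σ_{i ∈ {0,…,m−1}^d} s_i · φ(m·x − i). Then |f(x) − f(z)| ≤ |x − z|_∞^β for all x, z ∈ ℝ^d, i.e. f has Hölder-β seminorm (with respect to the maximum norm) at most 1. -/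
open scoped BigOperators

private lemma abs_eq_zero_of_forall_le_rpow {β c : ℝ} (hβ0 : 0 < β)
    (h : ∀ ε : ℝ, 0 < ε → |c| ≤ ε ^ β) : c = 0 := by
  by_contra hc
  have hc0 : 0 < |c| := abs_pos.mpr hc
  have hε0 : (0:ℝ) < (|c|/2) ^ (1/β) := Real.rpow_pos_of_pos (by linarith) _
  have hle := h _ hε0
  rw [← Real.rpow_mul (by positivity), one_div, inv_mul_cancel₀ (ne_of_gt hβ0),
    Real.rpow_one] at hle
  linarith

private lemma phi_interior {d : ℕ} {β : ℝ} (hβ0 : 0 < β)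
    {φ : (Fin d → ℝ) → ℝ}
    (hφ0 : ∀ x : Fin d → ℝ, x ∉ Set.Icc (0 : Fin d → ℝ) 1 → φ x = 0)
    (hφH : ∀ x z : Fin d → ℝ, |φ x - φ z| ≤ ‖x - z‖ ^ β)
    {x : Fin d → ℝ} (hx : φ x ≠ 0) (j : Fin d) : 0 < x j ∧ x j < 1 := by
  have hxI : x ∈ Set.Icc (0 : Fin d → ℝ) 1 := by
    by_contra h; exact hx (hφ0 x h)
  have h0 : (0:ℝ) ≤ x j := hxI.1 j
  have h1 : x j ≤ 1 := hxI.2 j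
  -- general perturbation step
  have pert : ∀ c : ℝ, (∀ ε : ℝ, 0 < ε → x j + c * ε ∉ Set.Icc (0:ℝ) 1) → |c| ≤ 1 → False := by
    intro c hc hc1
    apply hx
    apply abs_eq_zero_of_forall_le_rpow hβ0
    intro ε hε
    set w : Fin d → ℝ := Function.update x j (x j + c * ε) with hw
    have hwout : w ∉ Set.Icc (0 : Fin d → ℝ) 1 := by
      intro hmem
      have h0w := hmem.1 j
      have h1w := hmem.2 j
      rw [hw, Function.update_self] at h0w h1w
      exact hc ε hε ⟨h0w, h1w⟩
    have hdist : ‖x - w‖ ≤ ε := by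
      rw [pi_norm_le_iff_of_nonneg (le_of_lt hε)]
      intro k
      by_cases hk : k = j
      · subst hk
        simp only [Pi.sub_apply, hw, Function.update_self, Real.norm_eq_abs]
        have : x k - (x k + c * ε) = -(c * ε) := by ring
        rw [this, abs_neg, abs_mul, abs_of_pos hε]
        nlinarith [abs_nonneg c]
      · simp [Pi.sub_apply, hw, Function.update_of_ne hk]
        linarith
    have := hφH x w
    rw [hφ0 w hwout, sub_zero] at this
    calc |φ x| ≤ ‖x - w‖ ^ β := this
      _ ≤ ε ^ β := Real.rpow_le_rpow (norm_nonneg _) hdist (le_of_lt hβ0)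
  constructor
  · rcases lt_or_eq_of_le h0 with h | h
    · exact h
    · exfalso
      apply pert (-1)
      · intro ε hε hmem
        have := hmem.1
        nlinarith
      · simp
  · rcases lt_or_eq_of_le h1 with h | h
    · exact h
    · exfalso
      apply pert 1
      · intro ε hε hmem
        have := hmem.2
        nlinarith
      · simp

private lemma phi_le_one {d : ℕ} {β : ℝ} (hβ0 : 0 < β)
    {φ : (Fin d → ℝ) → ℝ}
    (hφ0 : ∀ x : Fin d → ℝ, x ∉ Set.Icc (0 : Fin d → ℝ) 1 → φ x = 0)
    (hφH : ∀ x z : Fin d → ℝ, |φ x - φ z| ≤ ‖x - z‖ ^ β)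
    (hd : 0 < d) (y : Fin d → ℝ) : |φ y| ≤ 1 := by
  set j : Fin d := ⟨0, hd⟩
  by_cases hy : y ∈ Set.Icc (0 : Fin d → ℝ) 1
  · have h0 : (0:ℝ) ≤ y j := hy.1 j
    -- shift coordinate j by +1 if y j > 0, else by -1
    rcases lt_or_eq_of_le h0 with h | h
    · -- y j > 0, use y j + 1 > 1
      set w : Fin d → ℝ := Function.update y j (y j + 1) with hw
      have hwout : w ∉ Set.Icc (0 : Fin d → ℝ) 1 := by
        intro hmem
        have h1w : w j ≤ 1 := hmem.2 j
        rw [hw, Function.update_self] at h1w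
        linarith
      have hdist : ‖y - w‖ ≤ 1 := by
        rw [pi_norm_le_iff_of_nonneg zero_le_one]
        intro k
        by_cases hk : k = j
        · subst hk
          simp [Pi.sub_apply, hw, Function.update_self, Real.norm_eq_abs]
        · simp [Pi.sub_apply, hw, Function.update_of_ne hk]
      have hH := hφH y w
      rw [hφ0 w hwout, sub_zero] at hH
      calc |φ y| ≤ ‖y - w‖ ^ β := hH
        _ ≤ 1 ^ β := Real.rpow_le_rpow (norm_nonneg _) hdist (le_of_lt hβ0)
        _ = 1 := Real.one_rpow β
    · -- y j = 0, use -1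
      set w : Fin d → ℝ := Function.update y j (-1) with hw
      have hwout : w ∉ Set.Icc (0 : Fin d → ℝ) 1 := by
        intro hmem
        have h0w : (0:ℝ) ≤ w j := hmem.1 j
        rw [hw, Function.update_self] at h0w
        linarith
      have hdist : ‖y - w‖ ≤ 1 := by
        rw [pi_norm_le_iff_of_nonneg zero_le_one]
        intro k
        by_cases hk : k = j
        · subst hk
          simp [Pi.sub_apply, hw, Function.update_self, Real.norm_eq_abs, ← h]
        · simp [Pi.sub_apply, hw, Function.update_of_ne hk]
      have hH := hφH y w
      rw [hφ0 w hwout, sub_zero] at hH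
      calc |φ y| ≤ ‖y - w‖ ^ β := hH
        _ ≤ 1 ^ β := Real.rpow_le_rpow (norm_nonneg _) hdist (le_of_lt hβ0)
        _ = 1 := Real.one_rpow β
  · rw [hφ0 y hy]; simp

/-- If `φ : ℝ^d → ℝ` vanishes outside `[0,1]^d` and has Hölder-β seminorm (w.r.t.
the max norm) at most 1, then for any `m ≥ 1` and signs `s_i ∈ {±1}`, the function
`f(x) = (1/2)·m^{-β}·Σ_{i ∈ {0,…,m-1}^d} s_i·φ(m·x - i)` also has
Hölder-β seminorm at most 1. -/
theorem signed_bumps_hoelder (d : ℕ) (β : ℝ) (hβ0 : 0 < β) (hβ1 : β ≤ 1)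
    (φ : (Fin d → ℝ) → ℝ)
    (hφ0 : ∀ x : Fin d → ℝ, x ∉ Set.Icc (0 : Fin d → ℝ) 1 → φ x = 0)
    (hφH : ∀ x z : Fin d → ℝ, |φ x - φ z| ≤ ‖x - z‖ ^ β)
    (m : ℕ) (hm : 1 ≤ m)
    (s : (Fin d → Fin m) → ℝ) (hs : ∀ i, s i = 1 ∨ s i = -1)
    (f : (Fin d → ℝ) → ℝ)
    (hf : ∀ x, f x = 1 / 2 * (m : ℝ) ^ (-β) *
      ∑ i : Fin d → Fin m, s i * φ (fun j => (m : ℝ) * x j - (i j : ℝ)))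
    (x z : Fin d → ℝ) :
    |f x - f z| ≤ ‖x - z‖ ^ β := by
  rcases Nat.eq_zero_or_pos d with hd | hd
  · -- d = 0: x = z
    subst hd
    have hxz : x = z := funext fun j => j.elim0
    rw [hxz, sub_self, abs_zero]
    positivity
  -- notation
  have hm0 : (0:ℝ) < m := by exact_mod_cast hm
  have habs : ∀ i, |s i| = 1 := by
    intro i; rcases hs i with h | h <;> simp [h]
  set u : (Fin d → Fin m) → (Fin d → ℝ) := fun i => fun j => (m : ℝ) * x j - (i j : ℝ) with hu
  set v : (Fin d → Fin m) → (Fin d → ℝ) := fun i => fun j => (m : ℝ) * z j - (i j : ℝ) with hv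
  -- uniqueness of nonzero bump
  have huniq : ∀ (y : Fin d → ℝ) (i i' : Fin d → Fin m),
      φ (fun j => (m : ℝ) * y j - (i j : ℝ)) ≠ 0 →
      φ (fun j => (m : ℝ) * y j - (i' j : ℝ)) ≠ 0 → i = i' := by
    intro y i i' hi hi'
    funext j
    have h1 := phi_interior hβ0 hφ0 hφH hi j
    have h2 := phi_interior hβ0 hφ0 hφH hi' j
    have hlt1 : ((i j : ℕ) : ℝ) < ((i' j : ℕ) : ℝ) + 1 := by
      linarith [h1.1, h2.2]
    have hlt2 : ((i' j : ℕ) : ℝ) < ((i j : ℕ) : ℝ) + 1 := by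
      linarith [h2.1, h1.2]
    have n1 : (i j : ℕ) < (i' j : ℕ) + 1 := by exact_mod_cast hlt1
    have n2 : (i' j : ℕ) < (i j : ℕ) + 1 := by exact_mod_cast hlt2
    exact Fin.ext (by omega)
  -- support card bounds
  have hcard : ∀ (y : Fin d → ℝ),
      (Finset.univ.filter
        (fun i : Fin d → Fin m => φ (fun j => (m : ℝ) * y j - (i j : ℝ)) ≠ 0)).card ≤ 1 := by
    intro y
    apply Finset.card_le_one.mpr
    intro a ha b hb
    rw [Finset.mem_filter] at ha hb
    exact huniq y a b ha.2 hb.2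
  -- bound on each raw sum
  have hsum1 : ∀ (y : Fin d → ℝ),
      |∑ i : Fin d → Fin m, s i * φ (fun j => (m : ℝ) * y j - (i j : ℝ))| ≤ 1 := by
    intro y
    set A := Finset.univ.filter
      (fun i : Fin d → Fin m => φ (fun j => (m : ℝ) * y j - (i j : ℝ)) ≠ 0) with hA
    have hsub : ∑ i : Fin d → Fin m, s i * φ (fun j => (m : ℝ) * y j - (i j : ℝ))
        = ∑ i ∈ A, s i * φ (fun j => (m : ℝ) * y j - (i j : ℝ)) := by
      symm
      apply Finset.sum_subset (Finset.filter_subset _ _)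
      intro i _ hi
      rw [Finset.mem_filter, not_and, not_not] at hi
      rw [hi (Finset.mem_univ i), mul_zero]
    rw [hsub]
    calc |∑ i ∈ A, s i * φ (fun j => (m : ℝ) * y j - (i j : ℝ))|
        ≤ ∑ i ∈ A, |s i * φ (fun j => (m : ℝ) * y j - (i j : ℝ))| :=
          Finset.abs_sum_le_sum_abs _ _
      _ ≤ ∑ _i ∈ A, (1:ℝ) := by
          apply Finset.sum_le_sum
          intro i _
          rw [abs_mul, habs i, one_mul]
          exact phi_le_one hβ0 hφ0 hφH hd _
      _ = A.card := by simp
      _ ≤ 1 := by exact_mod_cast hcard y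
  -- difference of raw sums
  set C : ℝ := ((m : ℝ) * ‖x - z‖) ^ β with hC
  have hC0 : 0 ≤ C := Real.rpow_nonneg (by positivity) β
  have hdiff : |(∑ i : Fin d → Fin m, s i * φ (u i)) - ∑ i : Fin d → Fin m, s i * φ (v i)|
      ≤ 2 * C := by
    by_cases hfar : 1 ≤ (m : ℝ) * ‖x - z‖
    · have h1 := hsum1 x
      have h2 := hsum1 z
      have hC1 : 1 ≤ C := Real.one_le_rpow hfar (le_of_lt hβ0)
      calc |(∑ i : Fin d → Fin m, s i * φ (u i)) - ∑ i : Fin d → Fin m, s i * φ (v i)|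
          ≤ |∑ i : Fin d → Fin m, s i * φ (u i)| + |∑ i : Fin d → Fin m, s i * φ (v i)| :=
            abs_sub _ _
        _ ≤ 1 + 1 := add_le_add h1 h2
        _ ≤ 2 * C := by linarith
    · -- near case: at most two nonzero terms
      set S := Finset.univ.filter
        (fun i : Fin d → Fin m => φ (u i) ≠ 0 ∨ φ (v i) ≠ 0) with hS
      have hterm : ∀ i, |φ (u i) - φ (v i)| ≤ C := by
        intro i
        have hsub : u i - v i = (m : ℝ) • (x - z) := by
          funext j
          simp [hu, hv, Pi.sub_apply]
          ring
        have hnorm : ‖u i - v i‖ = (m : ℝ) * ‖x - z‖ := by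
          rw [hsub, norm_smul, Real.norm_eq_abs, abs_of_pos hm0]
        calc |φ (u i) - φ (v i)| ≤ ‖u i - v i‖ ^ β := hφH _ _
          _ = C := by rw [hnorm]
      have hScard : S.card ≤ 2 := by
        have hsubset : S ⊆ (Finset.univ.filter (fun i : Fin d → Fin m => φ (u i) ≠ 0)) ∪
            (Finset.univ.filter (fun i : Fin d → Fin m => φ (v i) ≠ 0)) := by
          intro i hi
          rw [hS, Finset.mem_filter] at hi
          rw [Finset.mem_union, Finset.mem_filter, Finset.mem_filter]
          rcases hi.2 with h | h
          · exact Or.inl ⟨Finset.mem_univ i, h⟩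
          · exact Or.inr ⟨Finset.mem_univ i, h⟩
        calc S.card ≤ _ := Finset.card_le_card hsubset
          _ ≤ _ := Finset.card_union_le _ _
          _ ≤ 1 + 1 := add_le_add (hcard x) (hcard z)
          _ = 2 := rfl
      have hsplit : (∑ i : Fin d → Fin m, s i * φ (u i)) - ∑ i : Fin d → Fin m, s i * φ (v i)
          = ∑ i ∈ S, s i * (φ (u i) - φ (v i)) := by
        rw [← Finset.sum_sub_distrib]
        symm
        rw [show (fun i => s i * (φ (u i) - φ (v i))) = fun i => s i * φ (u i) - s i * φ (v i)
          from funext fun i => by ring] 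
        apply Finset.sum_subset (Finset.filter_subset _ _)
        intro i _ hi
        rw [Finset.mem_filter, not_and] at hi
        have := hi (Finset.mem_univ i)
        push_neg at this
        rw [this.1, this.2]; ring
      rw [hsplit]
      calc |∑ i ∈ S, s i * (φ (u i) - φ (v i))|
          ≤ ∑ i ∈ S, |s i * (φ (u i) - φ (v i))| := Finset.abs_sum_le_sum_abs _ _
        _ ≤ ∑ _i ∈ S, C := by
            apply Finset.sum_le_sum
            intro i _
            rw [abs_mul, habs i, one_mul]
            exact hterm i
        _ = S.card * C := by rw [Finset.sum_const, nsmul_eq_mul]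
        _ ≤ 2 * C := by
            apply mul_le_mul_of_nonneg_right _ hC0
            exact_mod_cast hScard
  -- conclude
  rw [hf x, hf z, ← mul_sub]
  rw [abs_mul]
  have hcoef : |1 / 2 * (m : ℝ) ^ (-β)| = 1 / 2 * (m : ℝ) ^ (-β) := by
    apply abs_of_pos
    positivity
  rw [hcoef]
  have hCval : C = (m : ℝ) ^ β * ‖x - z‖ ^ β :=
    Real.mul_rpow (le_of_lt hm0) (norm_nonneg _)
  have key : 1 / 2 * (m : ℝ) ^ (-β) * (2 * C) = ‖x - z‖ ^ β := by
    rw [hCval]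
    have : (m : ℝ) ^ (-β) * (m : ℝ) ^ β = 1 := by
      rw [← Real.rpow_add hm0]
      simp
    calc 1 / 2 * (m : ℝ) ^ (-β) * (2 * ((m : ℝ) ^ β * ‖x - z‖ ^ β))
        = ((m : ℝ) ^ (-β) * (m : ℝ) ^ β) * ‖x - z‖ ^ β := by ring
      _ = ‖x - z‖ ^ β := by rw [this, one_mul]
  calc 1 / 2 * (m : ℝ) ^ (-β) *
        |(∑ i : Fin d → Fin m, s i * φ (u i)) - ∑ i : Fin d → Fin m, s i * φ (v i)|
      ≤ 1 / 2 * (m : ℝ) ^ (-β) * (2 * C) := by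
        apply mul_le_mul_of_nonneg_left hdiff
        positivity
    _ = ‖x - z‖ ^ β := key
end

section
/- Let k be an odd natural number, let Y_1, …, Y_k be independent real random variables on a probability space, let a ∈ ℝ, ε > 0, and 0 < α < 1/2, and assume P( |Y_i − a| > ε ) ≤ α for each i = 1, …, k. Let M denote the median of Y_1, …, Y_k, i.e. the ((k+1)/2)-th smallest value among Y_1, …, Y_k. Then P( |M − a| > ε ) ≤ (1/2) · (4·α·(1−α))^{k/2}. -/
open Finset

noncomputable def mtF (k m : ℕ) (q : Fin k → ℝ) : ℝ :=
  ∑ S ∈ univ.filter (fun S : Finset (Fin k) => m ≤ S.card),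
    (∏ i ∈ S, q i) * ∏ i ∈ Sᶜ, (1 - q i)

lemma mtF_update_le (k m : ℕ) (r : Fin k → ℝ) (hr0 : ∀ j, 0 ≤ r j) (hr1 : ∀ j, r j ≤ 1)
    (i : Fin k) {s t : ℝ} (hst : s ≤ t) :
    mtF k m (Function.update r i s) ≤ mtF k m (Function.update r i t) := by
  classical
  set P : Finset (Fin k) → ℝ :=
    fun S => (∏ j ∈ S.erase i, r j) * ∏ j ∈ Sᶜ.erase i, (1 - r j) with hP
  have hPnn : ∀ S, 0 ≤ P S := by
    intro S
    exact mul_nonneg (Finset.prod_nonneg fun j _ => hr0 j)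
      (Finset.prod_nonneg fun j _ => by linarith [hr1 j])
  have key : ∀ x : ℝ, mtF k m (Function.update r i x) =
      x * ∑ S ∈ univ.filter (fun S : Finset (Fin k) => m ≤ S.card ∧ i ∈ S), P S
      + (1 - x) * ∑ S ∈ univ.filter (fun S : Finset (Fin k) => m ≤ S.card ∧ i ∉ S),
          P (insert i S) := by
    intro x
    rw [mtF, ← Finset.sum_filter_add_sum_filter_not _ (fun S => i ∈ S), Finset.mul_sum,
      Finset.mul_sum, Finset.filter_filter, Finset.filter_filter]
    congr 1
    · apply Finset.sum_congr rfl
      intro S hS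
      simp only [Finset.mem_filter] at hS
      obtain ⟨-, -, hiS⟩ := hS
      have h1 : ∏ j ∈ S, Function.update r i x j = x * ∏ j ∈ S.erase i, r j := by
        rw [Finset.prod_update_of_mem hiS, ← Finset.erase_eq]
      have h2 : ∏ j ∈ Sᶜ, (1 - Function.update r i x j) = ∏ j ∈ Sᶜ.erase i, (1 - r j) := by
        rw [Finset.erase_eq_of_notMem (by simp [hiS])]
        apply Finset.prod_congr rfl
        intro j hj
        have : j ≠ i := by rintro rfl; simp [hiS] at hj
        rw [Function.update_of_ne this]
      simp only [h1, h2, hP]; ring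
    · apply Finset.sum_congr rfl
      intro S hS
      simp only [Finset.mem_filter] at hS
      obtain ⟨-, -, hiS⟩ := hS
      have h1 : ∏ j ∈ S, Function.update r i x j = ∏ j ∈ S, r j := by
        apply Finset.prod_congr rfl
        intro j hj
        have : j ≠ i := by rintro rfl; exact hiS hj
        rw [Function.update_of_ne this]
      have h2 : ∏ j ∈ Sᶜ, (1 - Function.update r i x j)
          = (1 - x) * ∏ j ∈ Sᶜ.erase i, (1 - r j) := by
        have : ∀ j ∈ Sᶜ, (1 - Function.update r i x j)
            = Function.update (fun j => 1 - r j) i (1 - x) j := by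
          intro j _
          by_cases h : j = i
          · subst h; simp
          · rw [Function.update_of_ne h, Function.update_of_ne h]
        rw [Finset.prod_congr rfl this, Finset.prod_update_of_mem (by simp [hiS]),
          ← Finset.erase_eq]
      simp only [h1, h2, hP]
      rw [Finset.erase_insert hiS, Finset.compl_insert, Finset.erase_idem]
      ring
  rw [key s, key t]
  have hsub : (univ.filter (fun S : Finset (Fin k) => m ≤ S.card ∧ i ∉ S)).image (insert i)
      ⊆ univ.filter (fun S : Finset (Fin k) => m ≤ S.card ∧ i ∈ S) := by
    intro T hT
    simp only [Finset.mem_image, Finset.mem_filter, Finset.mem_univ, true_and] at hT ⊢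
    obtain ⟨S, ⟨hcard, hiS⟩, rfl⟩ := hT
    exact ⟨le_trans hcard (Finset.card_le_card (Finset.subset_insert _ _)), Finset.mem_insert_self _ _⟩
  have hBA : ∑ S ∈ univ.filter (fun S : Finset (Fin k) => m ≤ S.card ∧ i ∉ S), P (insert i S)
      ≤ ∑ S ∈ univ.filter (fun S : Finset (Fin k) => m ≤ S.card ∧ i ∈ S), P S := by
    have hinj : ∀ S ∈ univ.filter (fun S : Finset (Fin k) => m ≤ S.card ∧ i ∉ S),
        ∀ T ∈ univ.filter (fun S : Finset (Fin k) => m ≤ S.card ∧ i ∉ S),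
        insert i S = insert i T → S = T := by
      intro S hS T hT h
      simp only [Finset.mem_filter] at hS hT
      have := congrArg (Finset.erase · i) h
      simpa [Finset.erase_insert hS.2.2, Finset.erase_insert hT.2.2] using this
    rw [show (∑ S ∈ univ.filter (fun S : Finset (Fin k) => m ≤ S.card ∧ i ∉ S), P (insert i S))
        = ∑ T ∈ (univ.filter (fun S : Finset (Fin k) => m ≤ S.card ∧ i ∉ S)).image (insert i), P T
      from (Finset.sum_image hinj).symm]
    exact Finset.sum_le_sum_of_subset_of_nonneg hsub (fun T _ _ => hPnn T)
  nlinarith [sub_nonneg.2 hBA, sub_nonneg.2 hst]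

lemma mtF_le_const (k m : ℕ) (q : Fin k → ℝ) (α : ℝ) (hq0 : ∀ i, 0 ≤ q i)
    (hqα : ∀ i, q i ≤ α) (hα0 : 0 ≤ α) (hα1 : α ≤ 1) :
    mtF k m q ≤ mtF k m (fun _ => α) := by
  classical
  have main : ∀ u : Finset (Fin k),
      mtF k m q ≤ mtF k m (fun j => if j ∈ u then α else q j) := by
    intro u
    induction u using Finset.induction_on with
    | empty =>
      have : (fun j => if j ∈ (∅ : Finset (Fin k)) then α else q j) = q := by
        funext j; simp
      rw [this]
    | @insert i u hni ih =>
      set r : Fin k → ℝ := fun j => if j ∈ u then α else q j with hr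
      have hr0 : ∀ j, 0 ≤ r j := by
        intro j; rw [hr]; dsimp only; split
        · exact hα0
        · exact hq0 j
      have hr1 : ∀ j, r j ≤ 1 := by
        intro j; rw [hr]; dsimp only; split
        · exact hα1
        · exact le_trans (hqα j) hα1
      have heq : (fun j => if j ∈ insert i u then α else q j) = Function.update r i α := by
        funext j
        by_cases h : j = i
        · subst h; simp [hr, hni]
        · rw [Function.update_of_ne h, hr]
          simp [Finset.mem_insert, h]
      have heq2 : r = Function.update r i (q i) := by
        rw [show q i = r i by simp [hr, hni], Function.update_eq_self]
      calc mtF k m q ≤ mtF k m r := ih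
        _ = mtF k m (Function.update r i (q i)) := by rw [← heq2]
        _ ≤ mtF k m (Function.update r i α) := mtF_update_le k m r hr0 hr1 i (hqα i)
        _ = _ := by rw [heq]
  simpa using main Finset.univ

lemma card_filter_half (n : ℕ) :
    (univ.filter (fun S : Finset (Fin (2*n+1)) => n+1 ≤ S.card)).card = 2^(2*n) := by
  classical
  have hmem : ∀ S : Finset (Fin (2*n+1)), Sᶜ.card = 2*n+1 - S.card := by
    intro S; rw [Finset.card_compl, Fintype.card_fin]
  have hcard : ∀ S : Finset (Fin (2*n+1)), S.card ≤ 2*n+1 := by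
    intro S
    simpa using Finset.card_le_card (Finset.subset_univ S)
  have hbij : (univ.filter (fun S : Finset (Fin (2*n+1)) => n+1 ≤ S.card)).card
      = (univ.filter (fun S : Finset (Fin (2*n+1)) => ¬ (n+1 ≤ S.card))).card := by
    apply Finset.card_bij' (fun S _ => Sᶜ) (fun S _ => Sᶜ)
    · intro S _; simp
    · intro S _; simp
    · intro S hS
      simp only [Finset.mem_filter, Finset.mem_univ, true_and] at hS ⊢
      rw [hmem]; omega
    · intro S hS
      simp only [Finset.mem_filter, Finset.mem_univ, true_and] at hS ⊢
      rw [hmem]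
      have := hcard S
      omega
  have htot := Finset.card_filter_add_card_filter_not
    (s := (univ : Finset (Finset (Fin (2*n+1)))))
    (p := fun S : Finset (Fin (2*n+1)) => n+1 ≤ S.card)
  have huniv : (univ : Finset (Finset (Fin (2*n+1)))).card = 2^(2*n+1) := by
    rw [Finset.card_univ, Fintype.card_finset, Fintype.card_fin]
  have h2 : 2 * (univ.filter (fun S : Finset (Fin (2*n+1)) => n+1 ≤ S.card)).card
      = 2 * 2^(2*n) := by
    rw [two_mul]
    nth_rewrite 2 [hbij]
    rw [htot, huniv, pow_succ]
    ring
  omega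

lemma mtF_const_bound (n : ℕ) (α : ℝ) (hα0 : 0 ≤ α) (hα : α ≤ 1/2) :
    mtF (2*n+1) (n+1) (fun _ => α) ≤ 2^(2*n) * (α^(n+1) * (1-α)^n) := by
  have h1α : α ≤ 1 - α := by linarith
  have h1α0 : 0 ≤ 1 - α := by linarith
  rw [mtF]
  have hterm : ∀ S ∈ univ.filter (fun S : Finset (Fin (2*n+1)) => n+1 ≤ S.card),
      (∏ _i ∈ S, α) * ∏ _i ∈ Sᶜ, (1 - α) ≤ α^(n+1) * (1-α)^n := by
    intro S hS
    simp only [Finset.mem_filter, Finset.mem_univ, true_and] at hS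
    rw [Finset.prod_const, Finset.prod_const, Finset.card_compl, Fintype.card_fin]
    have hj2 : S.card ≤ 2*n+1 := by
      simpa using Finset.card_le_card (Finset.subset_univ S)
    have e1 : α^S.card = α^(n+1) * α^(S.card-(n+1)) := by
      rw [← pow_add]
      congr 1
      omega
    have e2 : (1-α)^(S.card-(n+1)) * (1-α)^(2*n+1-S.card) = (1-α)^n := by
      rw [← pow_add]
      congr 1
      omega
    calc α^S.card * (1-α)^(2*n+1-S.card)
        = α^(n+1) * α^(S.card-(n+1)) * (1-α)^(2*n+1-S.card) := by rw [e1]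
      _ ≤ α^(n+1) * (1-α)^(S.card-(n+1)) * (1-α)^(2*n+1-S.card) := by
          gcongr
      _ = α^(n+1) * (1-α)^n := by rw [mul_assoc, e2]
  calc (∑ S ∈ univ.filter (fun S : Finset (Fin (2*n+1)) => n+1 ≤ S.card),
        (∏ _i ∈ S, α) * ∏ _i ∈ Sᶜ, (1 - α))
      ≤ (univ.filter (fun S : Finset (Fin (2*n+1)) => n+1 ≤ S.card)).card
          • (α^(n+1) * (1-α)^n) := Finset.sum_le_card_nsmul _ _ _ hterm
    _ = 2^(2*n) * (α^(n+1) * (1-α)^n) := by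
        rw [card_filter_half, nsmul_eq_mul]
        norm_num

lemma final_bound (n : ℕ) (α : ℝ) (hα0 : 0 < α) (hα1 : α < 1/2) :
    (2:ℝ)^(2*n) * (α^(n+1) * (1-α)^n) ≤ 1/2 * (4*α*(1-α)) ^ ((((2*n+1 : ℕ) : ℝ))/2) := by
  have h1α : 0 < 1 - α := by linarith
  have hc : 0 < 4*α*(1-α) := by positivity
  have hexp : ((2*n+1 : ℕ) : ℝ)/2 = (n : ℝ) + 1/2 := by push_cast; ring
  rw [hexp, Real.rpow_add hc, Real.rpow_natCast, ← Real.sqrt_eq_rpow]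
  have h2 : 2*α ≤ Real.sqrt (4*α*(1-α)) := by
    have hsq : (2*α)^2 ≤ 4*α*(1-α) := by nlinarith
    calc 2*α = Real.sqrt ((2*α)^2) := (Real.sqrt_sq (by positivity)).symm
      _ ≤ _ := Real.sqrt_le_sqrt hsq
  have heq : (2:ℝ)^(2*n) * (α^(n+1) * (1-α)^n) = 1/2 * ((4*α*(1-α))^n * (2*α)) := by
    rw [show (4:ℝ)*α*(1-α) = 2^2*(α*(1-α)) by ring, mul_pow, ← pow_mul, mul_pow, pow_succ]
    ring
  rw [heq]
  gcongr

open MeasureTheory ProbabilityTheory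

/-- Median trick: if `Y_1,…,Y_k` (k odd) are independent and each satisfies
`P(|Y_i - a| > ε) ≤ α` with `0 < α < 1/2`, and `M` is (pointwise) a median of
`Y_1,…,Y_k` (at least `(k+1)/2` of the values are `≤ M` and at least `(k+1)/2`
are `≥ M`), then `P(|M - a| > ε) ≤ (1/2)·(4α(1-α))^{k/2}`. -/
theorem median_trick {Ω : Type*} [MeasurableSpace Ω]
    (μ : Measure Ω) [IsProbabilityMeasure μ]
    (k : ℕ) (hk : Odd k)
    (Y : Fin k → Ω → ℝ) (hmeas : ∀ i, Measurable (Y i))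
    (hindep : iIndepFun Y μ)
    (a ε α : ℝ) (hε : 0 < ε) (hα0 : 0 < α) (hα1 : α < 1 / 2)
    (hY : ∀ i, μ {ω | |Y i ω - a| > ε} ≤ ENNReal.ofReal α)
    (M : Ω → ℝ)
    (hM : ∀ ω, (k + 1) / 2 ≤ (Finset.univ.filter (fun i => Y i ω ≤ M ω)).card ∧
      (k + 1) / 2 ≤ (Finset.univ.filter (fun i => M ω ≤ Y i ω)).card) :
    μ {ω | |M ω - a| > ε} ≤
      ENNReal.ofReal (1 / 2 * (4 * α * (1 - α)) ^ ((k : ℝ) / 2)) := by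
  classical
  obtain ⟨n, rfl⟩ := hk
  have hm : (2 * n + 1 + 1) / 2 = n + 1 := by omega
  set A : Fin (2*n+1) → Set Ω := fun i => {ω | ε < |Y i ω - a|} with hA
  have hGm : MeasurableSet {x : ℝ | ε < |x - a|} :=
    measurableSet_lt measurable_const ((measurable_id.sub measurable_const).abs)
  have hAm : ∀ i, MeasurableSet (A i) := fun i => hGm.preimage (hmeas i)
  set D : Finset (Fin (2*n+1)) → Fin (2*n+1) → Set Ω :=
    fun S i => if i ∈ S then A i else (A i)ᶜ with hD
  have hDcomap : ∀ S i,
      MeasurableSet[MeasurableSpace.comap (Y i) inferInstance] (D S i) := by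
    intro S i
    have hbase : MeasurableSet[MeasurableSpace.comap (Y i) inferInstance] (A i) :=
      ⟨{x : ℝ | ε < |x - a|}, hGm, rfl⟩
    by_cases h : i ∈ S
    · simpa [hD, h] using hbase
    · simpa [hD, h] using hbase.compl
  set 𝒮 : Finset (Finset (Fin (2*n+1))) :=
    Finset.univ.filter (fun S => n + 1 ≤ S.card) with h𝒮
  -- inclusion of the bad event into the union
  have hsub : {ω | |M ω - a| > ε} ⊆ ⋃ S ∈ 𝒮, ⋂ i, D S i := by
    intro ω hω
    set T : Finset (Fin (2*n+1)) := Finset.univ.filter (fun i => ω ∈ A i) with hT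
    have hTcard : n + 1 ≤ T.card := by
      have hωe : ε < |M ω - a| := hω
      rcases lt_abs.mp hωe with h | h
      · -- M ω - a > ε : all i with M ω ≤ Y i ω are bad
        have hsub2 : Finset.univ.filter (fun i => M ω ≤ Y i ω) ⊆ T := by
          apply Finset.monotone_filter_right
          intro i _ hi
          have : ε < Y i ω - a := lt_of_lt_of_le h (by linarith)
          exact lt_of_lt_of_le this (le_abs_self _)
        calc n + 1 = (2 * n + 1 + 1) / 2 := hm.symm
          _ ≤ _ := (hM ω).2
          _ ≤ T.card := Finset.card_le_card hsub2
      · -- M ω - a < -ε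
        have hsub2 : Finset.univ.filter (fun i => Y i ω ≤ M ω) ⊆ T := by
          apply Finset.monotone_filter_right
          intro i _ hi
          have : ε < -(Y i ω - a) := by linarith
          exact lt_of_lt_of_le this (neg_le_abs _)
        calc n + 1 = (2 * n + 1 + 1) / 2 := hm.symm
          _ ≤ _ := (hM ω).1
          _ ≤ T.card := Finset.card_le_card hsub2
    have hmemT : ω ∈ ⋂ i, D T i := by
      apply Set.mem_iInter.mpr
      intro i
      by_cases h : i ∈ T
      · have : ω ∈ A i := (Finset.mem_filter.mp h).2
        simpa [hD, h] using this
      · have : ω ∉ A i := fun hc => h (Finset.mem_filter.mpr ⟨Finset.mem_univ i, hc⟩)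
        simpa [hD, h] using this
    have hT𝒮 : T ∈ 𝒮 := by
      rw [h𝒮]
      exact Finset.mem_filter.mpr ⟨Finset.mem_univ T, hTcard⟩
    exact Set.mem_iUnion₂.mpr ⟨T, hT𝒮, hmemT⟩
  -- probabilities
  set p : Fin (2*n+1) → ENNReal := fun i => μ (A i) with hp
  set q : Fin (2*n+1) → ℝ := fun i => (p i).toReal with hq
  have hq0 : ∀ i, 0 ≤ q i := fun i => ENNReal.toReal_nonneg
  have hqα : ∀ i, q i ≤ α := fun i =>
    ENNReal.toReal_le_of_le_ofReal hα0.le (hY i)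
  have hq1 : ∀ i, 1 - q i ≥ 0 := fun i => by
    have := hqα i; linarith
  have hDval : ∀ (S : Finset (Fin (2*n+1))) i,
      μ (D S i) = ENNReal.ofReal (if i ∈ S then q i else 1 - q i) := by
    intro S i
    have hpt : p i ≠ ⊤ := measure_ne_top μ _
    have hofq : ENNReal.ofReal (q i) = p i := ENNReal.ofReal_toReal hpt
    by_cases h : i ∈ S
    · simp only [hD, h, if_true]
      exact hofq.symm
    · simp only [hD, h, if_false]
      rw [measure_compl (hAm i) hpt, measure_univ,
        ENNReal.ofReal_sub _ (hq0 i), hofq, ENNReal.ofReal_one]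
  have hBS : ∀ S : Finset (Fin (2*n+1)),
      μ (⋂ i, D S i) = ENNReal.ofReal ((∏ i ∈ S, q i) * ∏ i ∈ Sᶜ, (1 - q i)) := by
    intro S
    rw [hindep.meas_iInter (fun i => hDcomap S i)]
    have h1 : (∏ i, μ (D S i))
        = ∏ i, ENNReal.ofReal (if i ∈ S then q i else 1 - q i) :=
      Finset.prod_congr rfl fun i _ => hDval S i
    rw [h1, ← ENNReal.ofReal_prod_of_nonneg (fun i _ => by
      by_cases h : i ∈ S
      · simpa [h] using hq0 i
      · simpa [h] using hq1 i)]
    congr 1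
    rw [← Finset.prod_mul_prod_compl S]
    congr 1
    · exact Finset.prod_congr rfl fun i hi => by simp [hi]
    · exact Finset.prod_congr rfl fun i hi => by
        simp [Finset.mem_compl.mp hi]
  have hterm_nonneg : ∀ S : Finset (Fin (2*n+1)),
      0 ≤ (∏ i ∈ S, q i) * ∏ i ∈ Sᶜ, (1 - q i) := fun S =>
    mul_nonneg (Finset.prod_nonneg fun i _ => hq0 i)
      (Finset.prod_nonneg fun i _ => hq1 i)
  calc μ {ω | |M ω - a| > ε}
      ≤ μ (⋃ S ∈ 𝒮, ⋂ i, D S i) := measure_mono hsub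
    _ ≤ ∑ S ∈ 𝒮, μ (⋂ i, D S i) := measure_biUnion_finset_le _ _
    _ = ENNReal.ofReal (mtF (2*n+1) (n+1) q) := by
        rw [mtF, ← h𝒮, ENNReal.ofReal_sum_of_nonneg (fun S _ => hterm_nonneg S)]
        exact Finset.sum_congr rfl fun S _ => hBS S
    _ ≤ ENNReal.ofReal (1 / 2 * (4 * α * (1 - α)) ^ (((2*n+1 : ℕ) : ℝ) / 2)) := by
        apply ENNReal.ofReal_le_ofReal
        calc mtF (2*n+1) (n+1) q
            ≤ mtF (2*n+1) (n+1) (fun _ => α) :=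
              mtF_le_const _ _ _ _ hq0 hqα hα0.le (by linarith)
          _ ≤ 2^(2*n) * (α^(n+1) * (1-α)^n) := mtF_const_bound n α hα0.le hα1.le
          _ ≤ _ := final_bound n α hα0 hα1
end

section
/- Let d, m ∈ ℕ with m ≥ 1, β ∈ (0,1], and let f : [0,1]^d → ℝ satisfy |f(x) − f(z)| ≤ |x − z|_∞^β for all x, z ∈ [0,1]^d. Let (X_i)_{i ∈ {0,…,m−1}^d} be independent random variables with X_i uniformly distributed on the subcube G_i := Π_{j=1}^d [i_j/m, (i_j+1)/m), and let S := m^{-d} · Σ_{i ∈ {0,…,m−1}^d} f(X_i). Then for every ε > 0, P( | S − ∫_{[0,1]^d} f(x) dx | > ε ) ≤ 2 · exp( −2 · m^{d + 2β} · ε² ). -/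
open MeasureTheory ProbabilityTheory
open Real


lemma hoeffding_aux {p : ℝ} (hp0 : 0 ≤ p) (hp1 : p ≤ 1) (h : ℝ) :
    (1 - p) * exp (-p * h) + p * exp ((1 - p) * h) ≤ exp (h ^ 2 / 8) := by
  set u : ℝ → ℝ := fun x => 1 - p + p * exp x with hu_def
  have hu : ∀ x, 0 < u x := by
    intro x
    have he := exp_pos x
    rcases lt_or_ge p 1 with hp | hp
    · have : 0 ≤ p * exp x := by positivity
      simp only [hu_def]; linarith
    · have hp' : p = 1 := le_antisymm hp1 hp
      simp only [hu_def, hp']; linarith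
  set G' : ℝ → ℝ := fun x => x / 4 - (p * exp x / u x - p) with hG'_def
  set G : ℝ → ℝ := fun x => x ^ 2 / 8 - (Real.log (u x) - p * x) with hG_def
  have hud : ∀ x, HasDerivAt u (p * exp x) x := by
    intro x
    exact ((Real.hasDerivAt_exp x).const_mul p).const_add (1 - p)
  have hGd : ∀ x, HasDerivAt G (G' x) x := by
    intro x
    have h1 : HasDerivAt (fun x => Real.log (u x)) (p * exp x / u x) x :=
      (hud x).log (hu x).ne'
    have h2 : HasDerivAt (fun x : ℝ => x ^ 2 / 8) (x / 4) x := by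
      have := (hasDerivAt_pow 2 x).div_const 8
      exact this.congr_deriv (by norm_num; ring)
    exact h2.sub (h1.sub ((hasDerivAt_id x |>.const_mul p).congr_deriv (mul_one p)))
  have hG'd : ∀ x, HasDerivAt G' (1 / 4 - p * exp x * (1 - p) / (u x) ^ 2) x := by
    intro x
    have h1 : HasDerivAt (fun x => p * exp x / u x)
        ((p * exp x * u x - p * exp x * (p * exp x)) / (u x) ^ 2) x :=
      ((Real.hasDerivAt_exp x).const_mul p).div (hud x) (hu x).ne'
    have h2 : HasDerivAt (fun x : ℝ => x / 4) (1 / 4) x := (hasDerivAt_id x).div_const 4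
    have := h2.sub (h1.sub_const p)
    refine this.congr_deriv ?_
    have huu : u x - p * exp x = 1 - p := by simp [hu_def]
    have h3 : p * exp x * u x - p * exp x * (p * exp x) = p * exp x * (1 - p) := by
      rw [← huu]; ring
    rw [h3]
  -- second derivative nonneg
  have hG'nn : ∀ x, 0 ≤ 1 / 4 - p * exp x * (1 - p) / (u x) ^ 2 := by
    intro x
    set q : ℝ := p * exp x / u x with hq_def
    have hq0 : 0 ≤ q := div_nonneg (by positivity) (hu x).le
    have hq1 : q ≤ 1 := by
      rw [hq_def, div_le_one (hu x)]
      have : 0 ≤ 1 - p := by linarith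
      simp only [hu_def]; nlinarith [exp_pos x]
    have hqe : p * exp x * (1 - p) / (u x) ^ 2 = q * (1 - q) := by
      rw [hq_def]
      have huu : (1 : ℝ) - p * exp x / u x = (1 - p) / u x := by
        field_simp [(hu x).ne']
        simp [hu_def]
      rw [huu]
      field_simp
    rw [hqe]
    nlinarith [sq_nonneg (q - 1/2)]
  have hG'mono : Monotone G' := by
    refine monotone_of_deriv_nonneg (fun x => (hG'd x).differentiableAt) ?_
    intro x
    rw [(hG'd x).deriv]
    exact hG'nn x
  have hG'0 : G' 0 = 0 := by
    simp only [hG'_def, hu_def]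
    norm_num
  have hG0 : G 0 = 0 := by
    simp only [hG_def, hu_def]
    norm_num
  have hGnn : ∀ x, 0 ≤ G x := by
    intro x
    rcases le_or_gt 0 x with hx | hx
    · have hmono : MonotoneOn G (Set.Ici (0:ℝ)) := by
        refine monotoneOn_of_deriv_nonneg (convex_Ici 0)
          (fun y _ => ((hGd y).differentiableAt).continuousAt.continuousWithinAt)
          (fun y _ => ((hGd y).differentiableAt).differentiableWithinAt) ?_
        intro y hy
        rw [(hGd y).deriv]
        rw [← hG'0]
        exact hG'mono (le_of_lt (by simpa using hy))
      have := hmono (Set.self_mem_Ici) (by exact hx) hx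
      linarith [hG0]
    · have hanti : AntitoneOn G (Set.Iic (0:ℝ)) := by
        refine antitoneOn_of_deriv_nonpos (convex_Iic 0)
          (fun y _ => ((hGd y).differentiableAt).continuousAt.continuousWithinAt)
          (fun y _ => ((hGd y).differentiableAt).differentiableWithinAt) ?_
        intro y hy
        rw [(hGd y).deriv]
        rw [← hG'0]
        exact hG'mono (le_of_lt (by simpa using hy))
      have := hanti (Set.mem_Iic.2 hx.le) (Set.self_mem_Iic) hx.le
      linarith [hG0]
  -- conclude
  have key : Real.log (u h) - p * h ≤ h ^ 2 / 8 := by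
    have := hGnn h
    simp only [hG_def] at this
    linarith
  have hLHS : (1 - p) * exp (-p * h) + p * exp ((1 - p) * h) = exp (Real.log (u h) - p * h) := by
    rw [Real.exp_sub, Real.exp_log (hu h)]
    rw [show (1 - p) * h = h - p * h by ring, Real.exp_sub,
      show -p * h = -(p * h) by ring, Real.exp_neg]
    simp only [hu_def]
    field_simp
  rw [hLHS]
  exact Real.exp_le_exp.2 key

lemma hoeffding_lemma' {Ω : Type*} [MeasurableSpace Ω] (μ : Measure Ω) [IsProbabilityMeasure μ]
    {Y : Ω → ℝ} (hY : AEStronglyMeasurable Y μ) {a b : ℝ}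
    (hab : ∀ᵐ ω ∂μ, Y ω ∈ Set.Icc a b) (h0 : ∫ ω, Y ω ∂μ = 0) (t : ℝ) :
    mgf Y μ t ≤ Real.exp (t ^ 2 * (b - a) ^ 2 / 8) := by
  have hYint : Integrable Y μ := by
    refine Integrable.mono' (integrable_const (max |a| |b|)) hY ?_
    filter_upwards [hab] with ω hω
    rw [Real.norm_eq_abs, abs_le]
    constructor
    · have := neg_abs_le a; have := le_max_left |a| |b|; linarith [hω.1]
    · have := le_abs_self b; have := le_max_right |a| |b|; linarith [hω.2]
  have ha0 : a ≤ 0 := by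
    have := integral_mono_ae (integrable_const a) hYint (hab.mono fun ω h => h.1)
    simpa [h0] using this
  have hb0 : 0 ≤ b := by
    have := integral_mono_ae hYint (integrable_const b) (hab.mono fun ω h => h.2)
    simpa [h0] using this
  rcases eq_or_lt_of_le (ha0.trans hb0) with hab' | hab'
  · -- a = b = 0
    have ha : a = 0 := by linarith [hab'.le, hab'.ge]
    have hb : b = 0 := by linarith [hab'.le, hab'.ge]
    have hY0 : (fun ω => exp (t * Y ω)) =ᵐ[μ] fun _ => (1:ℝ) := by
      filter_upwards [hab] with ω hω
      rw [ha, hb] at hω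
      have : Y ω = 0 := le_antisymm hω.2 hω.1
      simp [this]
    have : mgf Y μ t = 1 := by
      rw [mgf, integral_congr_ae hY0, integral_const]; simp
    rw [this]
    exact Real.one_le_exp (by positivity)
  · -- a < b
    set p : ℝ := -a / (b - a) with hp_def
    have hba : (0:ℝ) < b - a := by linarith
    have hp0 : 0 ≤ p := div_nonneg (by linarith) hba.le
    have hp1 : p ≤ 1 := by rw [div_le_one hba]; linarith
    set K₁ : ℝ := (b * exp (t * a) - a * exp (t * b)) / (b - a) with hK1
    set K₂ : ℝ := (exp (t * b) - exp (t * a)) / (b - a) with hK2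
    have hpt : ∀ᵐ ω ∂μ, exp (t * Y ω) ≤ K₁ + Y ω * K₂ := by
      filter_upwards [hab] with ω hω
      set y := Y ω
      have hl1 : (0:ℝ) ≤ (b - y) / (b - a) := div_nonneg (by linarith [hω.2]) hba.le
      have hl2 : (0:ℝ) ≤ (y - a) / (b - a) := div_nonneg (by linarith [hω.1]) hba.le
      have hsum : (b - y) / (b - a) + (y - a) / (b - a) = 1 := by field_simp; ring
      have hconv := convexOn_exp.2 (Set.mem_univ (t * a)) (Set.mem_univ (t * b)) hl1 hl2 hsum
      have harg : ((b - y) / (b - a)) • (t * a) + ((y - a) / (b - a)) • (t * b) = t * y := by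
        simp only [smul_eq_mul]; field_simp; ring
      rw [harg] at hconv
      calc exp (t * y) ≤ (b - y) / (b - a) * exp (t * a) + (y - a) / (b - a) * exp (t * b) := by
            simpa using hconv
        _ = K₁ + y * K₂ := by rw [hK1, hK2]; field_simp; ring
    have hint_exp : Integrable (fun ω => exp (t * Y ω)) μ := by
      refine Integrable.mono' (integrable_const (exp (max (t * a) (t * b)))) ?_ ?_
      · exact (Real.measurable_exp.comp_aemeasurable (hY.aemeasurable.const_mul t)).aestronglyMeasurable
      · filter_upwards [hab] with ω hω
        rw [Real.norm_eq_abs, abs_of_pos (exp_pos _), Real.exp_le_exp]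
        rcases le_or_gt 0 t with ht | ht
        · exact le_max_of_le_right (by nlinarith [hω.2])
        · exact le_max_of_le_left (by nlinarith [hω.1])
    have hmgf : mgf Y μ t ≤ K₁ := by
      have hRint : Integrable (fun ω => K₁ + Y ω * K₂) μ :=
        (integrable_const K₁).add (hYint.mul_const K₂)
      have := integral_mono_ae hint_exp hRint hpt
      have hR : ∫ ω, (K₁ + Y ω * K₂) ∂μ = K₁ := by
        rw [integral_add (integrable_const K₁) (hYint.mul_const K₂), integral_const,
          integral_mul_const, h0]
        simp
      rw [hR] at this
      exact this
    refine hmgf.trans ?_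
    have e1 : t * a = -p * (t * (b - a)) := by rw [hp_def]; field_simp
    have e2 : t * b = (1 - p) * (t * (b - a)) := by rw [hp_def]; field_simp; ring
    have eK : K₁ = (1 - p) * exp (-p * (t * (b - a))) + p * exp ((1 - p) * (t * (b - a))) := by
      rw [hK1, ← e1, ← e2, hp_def]; field_simp; ring
    rw [eK]
    refine (hoeffding_aux hp0 hp1 (t * (b - a))).trans ?_
    rw [Real.exp_le_exp]
    rw [mul_pow]

lemma integrable_exp_mul_of_ae_Icc {Ω : Type*} [MeasurableSpace Ω] {μ : Measure Ω}
    [IsFiniteMeasure μ] {Y : Ω → ℝ} (hY : AEStronglyMeasurable Y μ) {a b t : ℝ}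
    (hab : ∀ᵐ ω ∂μ, Y ω ∈ Set.Icc a b) :
    Integrable (fun ω => exp (t * Y ω)) μ := by
  refine Integrable.mono' (integrable_const (exp (max (t * a) (t * b)))) ?_ ?_
  · exact (Real.measurable_exp.comp_aemeasurable (hY.aemeasurable.const_mul t)).aestronglyMeasurable
  · filter_upwards [hab] with ω hω
    rw [Real.norm_eq_abs, abs_of_pos (exp_pos _), Real.exp_le_exp]
    rcases le_or_gt 0 t with ht | ht
    · exact le_max_of_le_right (by nlinarith [hω.2])
    · exact le_max_of_le_left (by nlinarith [hω.1])

lemma integrable_of_ae_Icc {Ω : Type*} [MeasurableSpace Ω] {μ : Measure Ω}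
    [IsFiniteMeasure μ] {Y : Ω → ℝ} (hY : AEStronglyMeasurable Y μ) {a b : ℝ}
    (hab : ∀ᵐ ω ∂μ, Y ω ∈ Set.Icc a b) : Integrable Y μ := by
  refine Integrable.mono' (integrable_const (max |a| |b|)) hY ?_
  filter_upwards [hab] with ω hω
  rw [Real.norm_eq_abs, abs_le]
  constructor
  · have := neg_abs_le a; have := le_max_left |a| |b|; linarith [hω.1]
  · have := le_abs_self b; have := le_max_right |a| |b|; linarith [hω.2]

/-- Probabilistic error bound for stratified sampling of Hölder-β functions on
`[0,1]^d`: `P(|S - ∫ f| > ε) ≤ 2·exp(-2·m^{d+2β}·ε²)`. -/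
theorem stratified_sampling_hoelder_tail {Ω : Type*} [MeasurableSpace Ω]
    (μ : Measure Ω) [IsProbabilityMeasure μ]
    (d m : ℕ) (hm : 1 ≤ m)
    (β : ℝ) (hβ0 : 0 < β) (hβ1 : β ≤ 1)
    (f : (Fin d → ℝ) → ℝ)
    (hf : ∀ x z, x ∈ Set.Icc (0 : Fin d → ℝ) 1 → z ∈ Set.Icc (0 : Fin d → ℝ) 1 →
      |f x - f z| ≤ ‖x - z‖ ^ β)
    (X : (Fin d → Fin m) → Ω → (Fin d → ℝ))
    (hmeas : ∀ i, Measurable (X i))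
    (hindep : iIndepFun X μ)
    (hlaw : ∀ i, Measure.map (X i) μ =
      ((m : ENNReal) ^ d) •
        volume.restrict (Set.univ.pi fun j => Set.Ico ((i j : ℝ) / m) (((i j : ℝ) + 1) / m)))
    (ε : ℝ) (hε : 0 < ε) :
    μ {ω | |((m : ℝ) ^ d)⁻¹ * ∑ i : Fin d → Fin m, f (X i ω) -
        ∫ x in Set.Icc (0 : Fin d → ℝ) 1, f x| > ε} ≤
      ENNReal.ofReal (2 * Real.exp (-2 * (m : ℝ) ^ ((d : ℝ) + 2 * β) * ε ^ 2)) := by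
  classical
  set M : ℝ := (m : ℝ) with hM_def
  have hM1 : (1:ℝ) ≤ M := by rw [hM_def]; exact_mod_cast hm
  have hM0 : (0:ℝ) < M := by linarith
  -- the clamp map and the continuous extension g of f
  set clamp : (Fin d → ℝ) → (Fin d → ℝ) := fun x j => max 0 (min 1 (x j)) with hclamp_def
  have hclamp_mem : ∀ x, clamp x ∈ Set.Icc (0 : Fin d → ℝ) 1 := by
    intro x
    constructor <;> intro j
    · exact le_max_left _ _
    · simp only [hclamp_def, Pi.one_apply]
      exact max_le zero_le_one (min_le_left _ _)
  have hclamp_id : ∀ x, x ∈ Set.Icc (0 : Fin d → ℝ) 1 → clamp x = x := by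
    intro x hx
    funext j
    have h1 : x j ≤ 1 := hx.2 j
    have h0 : 0 ≤ x j := hx.1 j
    simp only [hclamp_def]
    rw [min_eq_right h1, max_eq_right h0]
  have hclamp_cont : Continuous clamp :=
    continuous_pi fun j => continuous_const.max (continuous_const.min (continuous_apply j))
  have hf_cont : ContinuousOn f (Set.Icc (0 : Fin d → ℝ) 1) := by
    intro x hx
    rw [ContinuousWithinAt, Metric.tendsto_nhdsWithin_nhds]
    intro η hη
    refine ⟨η ^ (1/β), Real.rpow_pos_of_pos hη _, fun {z} hz hdz => ?_⟩
    rw [Real.dist_eq]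
    calc |f z - f x| ≤ ‖z - x‖ ^ β := hf z x hz hx
      _ < η := by
        have h1 : ‖z - x‖ = dist z x := by rw [dist_eq_norm]
        have h2 : ‖z - x‖ ^ β < (η ^ (1/β)) ^ β :=
          Real.rpow_lt_rpow (norm_nonneg _) (h1 ▸ hdz) hβ0
        rwa [← Real.rpow_mul hη.le, one_div, inv_mul_cancel₀ hβ0.ne',
          Real.rpow_one] at h2
  -- continuous extension g
  set g : (Fin d → ℝ) → ℝ := fun x => f (clamp x) with hg_def
  have hg_cont : Continuous g := hf_cont.comp_continuous hclamp_cont hclamp_mem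
  have hg_eq : ∀ x ∈ Set.Icc (0:Fin d → ℝ) 1, g x = f x := by
    intro x hx
    simp only [hg_def]
    rw [hclamp_id x hx]
  have hg_hold : ∀ x z, x ∈ Set.Icc (0 : Fin d → ℝ) 1 → z ∈ Set.Icc (0 : Fin d → ℝ) 1 →
      |g x - g z| ≤ ‖x - z‖ ^ β := by
    intro x z hx hz
    rw [hg_eq x hx, hg_eq z hz]
    exact hf x z hx hz
  -- the subcubes
  set G : (Fin d → Fin m) → Set (Fin d → ℝ) :=
    fun i => Set.univ.pi fun j => Set.Ico ((i j : ℝ)/M) (((i j : ℝ)+1)/M) with hG_def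
  have hGmeas : ∀ i, MeasurableSet (G i) :=
    fun i => MeasurableSet.univ_pi fun j => measurableSet_Ico
  have hcast : ∀ (k : Fin m), ((k : ℝ) + 1) ≤ M := by
    intro k
    rw [hM_def]
    have : (k : ℕ) + 1 ≤ m := k.2
    exact_mod_cast this
  have hcast0 : ∀ (k : Fin m), (0:ℝ) ≤ (k : ℝ) := fun k => by positivity
  have hGsub : ∀ i, G i ⊆ Set.Icc (0 : Fin d → ℝ) 1 := by
    intro i x hx
    constructor <;> intro j
    · have h1 := (Set.mem_univ_pi.1 hx) j
      have h2 : (0:ℝ) ≤ (i j : ℝ)/M := div_nonneg (hcast0 _) hM0.le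
      simp only [Set.mem_Ico] at h1
      show (0:ℝ) ≤ x j
      linarith [h1.1]
    · have h1 := (Set.mem_univ_pi.1 hx) j
      simp only [Set.mem_Ico] at h1
      have h2 : ((i j : ℝ)+1)/M ≤ 1 := by
        rw [div_le_one hM0]; exact hcast _
      show x j ≤ (1:ℝ)
      linarith [h1.2]
  have hmemG : ∀ i, ∀ᵐ ω ∂μ, X i ω ∈ G i := by
    intro i
    rw [ae_iff]
    have : {ω | ¬ X i ω ∈ G i} = X i ⁻¹' (G i)ᶜ := rfl
    rw [this, ← Measure.map_apply (hmeas i) (hGmeas i).compl, hlaw i, Measure.smul_apply,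
      Measure.restrict_apply (hGmeas i).compl]
    have h0 : (G i)ᶜ ∩ (Set.univ.pi fun j => Set.Ico ((i j : ℝ)/M) (((i j : ℝ)+1)/M)) = ∅ := by
      rw [hG_def]
      exact Set.compl_inter_self _
    rw [h0]
    simp
  have hdisj : Pairwise (Function.onFun Disjoint G) := by
    intro i i' hne
    rw [Function.onFun, Set.disjoint_left]
    intro x hx hx'
    obtain ⟨j, hj⟩ := Function.ne_iff.1 hne
    have h1 := (Set.mem_univ_pi.1 hx) j
    have h2 := (Set.mem_univ_pi.1 hx') j
    simp only [Set.mem_Ico] at h1 h2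
    have key : ∀ (a b : Fin m), (a:ℕ) < (b:ℕ) → x j < ((a : ℝ)+1)/M → (b : ℝ)/M ≤ x j → False := by
      intro a b hab hu hl
      have hab' : ((a:ℝ) + 1) ≤ (b:ℝ) := by exact_mod_cast hab
      have : ((a:ℝ)+1)/M ≤ (b:ℝ)/M := div_le_div_of_nonneg_right hab' hM0.le
      linarith
    rcases (Fin.val_ne_iff.mpr hj).lt_or_gt with h | h
    · exact key _ _ h h1.2 h2.1
    · exact key _ _ h h2.2 h1.1
  have hunion : (⋃ i, G i) = Set.univ.pi fun _ => Set.Ico (0:ℝ) 1 := by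
    ext x
    simp only [Set.mem_iUnion, hG_def, Set.mem_univ_pi, Set.mem_Ico]
    constructor
    · rintro ⟨i, hi⟩ j
      have h1 := hi j
      have h2 : (0:ℝ) ≤ (i j : ℝ)/M := div_nonneg (hcast0 _) hM0.le
      have h3 : ((i j : ℝ)+1)/M ≤ 1 := by rw [div_le_one hM0]; exact hcast _
      exact ⟨le_trans h2 h1.1, lt_of_lt_of_le h1.2 h3⟩
    · intro hx
      have hfl : ∀ j, (⌊M * x j⌋₊ : ℕ) < m := by
        intro j
        rw [Nat.floor_lt (by nlinarith [(hx j).1])]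
        rw [hM_def] at *
        nlinarith [(hx j).2, hM0]
      refine ⟨fun j => ⟨⌊M * x j⌋₊, hfl j⟩, fun j => ?_⟩
      constructor
      · show ((⌊M * x j⌋₊ : ℝ))/M ≤ x j
        rw [div_le_iff₀ hM0]
        calc (⌊M * x j⌋₊ : ℝ) ≤ M * x j := Nat.floor_le (by nlinarith [(hx j).1])
          _ = x j * M := by ring
      · show x j < ((⌊M * x j⌋₊ : ℝ) + 1)/M
        rw [lt_div_iff₀ hM0]
        calc x j * M = M * x j := by ring
          _ < (⌊M * x j⌋₊ : ℝ) + 1 := Nat.lt_floor_add_one _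
  -- integral decomposition
  have hIntOn : IntegrableOn g (Set.Icc (0:Fin d → ℝ) 1) volume :=
    hg_cont.continuousOn.integrableOn_compact isCompact_Icc
  have hIccpi : Set.Icc (0:Fin d→ℝ) 1 = Set.univ.pi fun _ : Fin d => Set.Icc (0:ℝ) 1 := by
    rw [← Set.pi_univ_Icc]
    rfl
  have hIccIco : (Set.Icc (0:Fin d→ℝ) 1 : Set _) =ᵐ[volume]
      (Set.univ.pi fun _ : Fin d => Set.Ico (0:ℝ) 1) := by
    rw [MeasureTheory.ae_eq_set]
    constructor
    · have hsub : Set.Icc (0:Fin d→ℝ) 1 \ (Set.univ.pi fun _ => Set.Ico (0:ℝ) 1) ⊆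
          ⋃ j : Fin d, {x : Fin d → ℝ | x j = 1} := by
        rintro x ⟨hx1, hx2⟩
        rw [Set.mem_iUnion]
        rw [hIccpi, Set.mem_univ_pi] at hx1
        rw [Set.mem_univ_pi] at hx2
        push_neg at hx2
        obtain ⟨j, hj⟩ := hx2
        refine ⟨j, ?_⟩
        have h1 := hx1 j
        simp only [Set.mem_Icc] at h1
        simp only [Set.mem_Ico, not_and, not_lt] at hj
        exact le_antisymm h1.2 (hj h1.1)
      refine measure_mono_null hsub (measure_iUnion_null fun j => ?_)
      have hset : {x : Fin d → ℝ | x j = 1} =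
          Set.univ.pi (fun k => if k = j then ({1}:Set ℝ) else Set.univ) := by
        ext x
        simp only [Set.mem_setOf_eq, Set.mem_univ_pi]
        constructor
        · intro h k
          by_cases hk : k = j <;> simp [hk, h]
        · intro h
          have := h j
          simpa using this
      rw [hset, volume_pi_pi]
      refine Finset.prod_eq_zero (Finset.mem_univ j) ?_
      simp
    · have hsub : (Set.univ.pi fun _ : Fin d => Set.Ico (0:ℝ) 1) ⊆ Set.Icc (0:Fin d→ℝ) 1 := by
        intro x hx
        rw [hIccpi, Set.mem_univ_pi]
        intro j
        have := (Set.mem_univ_pi.1 hx) j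
        simp only [Set.mem_Ico] at this
        exact ⟨this.1, this.2.le⟩
      rw [Set.diff_eq_empty.2 hsub]
      simp
  have hsplit : ∫ x in Set.Icc (0:Fin d→ℝ) 1, g x = ∑ i : Fin d → Fin m, ∫ x in G i, g x := by
    rw [setIntegral_congr_set hIccIco, ← hunion,
      integral_iUnion_fintype hGmeas hdisj fun i => hIntOn.mono_set (hGsub i)]
  -- oscillation bounds on each closed subcube
  set z : (Fin d → Fin m) → (Fin d → ℝ) := fun i j => (i j : ℝ)/M with hz_def
  set K : (Fin d → Fin m) → Set (Fin d → ℝ) :=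
    fun i => Set.Icc (z i) (z i + fun _ => 1/M) with hK_def
  have hKco : ∀ i, IsCompact (K i) := fun i => isCompact_Icc
  have hzK : ∀ i, z i ∈ K i := by
    intro i
    refine ⟨le_refl _, ?_⟩
    intro j
    have : (0:ℝ) ≤ 1/M := by positivity
    simp only [Pi.add_apply]
    linarith
  have hKne : ∀ i, (K i).Nonempty := fun i => ⟨z i, hzK i⟩
  have hGK : ∀ i, G i ⊆ K i := by
    intro i x hx
    constructor <;> intro j
    · exact ((Set.mem_univ_pi.1 hx) j).1
    · have h1 := ((Set.mem_univ_pi.1 hx) j).2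
      simp only [Pi.add_apply]
      have : ((i j : ℝ)+1)/M = (i j : ℝ)/M + 1/M := by ring
      rw [this] at h1
      exact h1.le
  have hKsub : ∀ i, K i ⊆ Set.Icc (0:Fin d→ℝ) 1 := by
    intro i x hx
    constructor <;> intro j
    · have h1 := hx.1 j
      have h2 : (0:ℝ) ≤ (i j : ℝ)/M := div_nonneg (hcast0 _) hM0.le
      show (0:ℝ) ≤ x j
      simp only [hz_def] at h1
      linarith
    · have h1 := hx.2 j
      simp only [hz_def, Pi.add_apply] at h1
      have h2 : (i j : ℝ)/M + 1/M ≤ 1 := by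
        rw [← add_div, div_le_one hM0]
        exact hcast _
      show x j ≤ (1:ℝ)
      linarith
  have hosc : ∀ i, ∃ lo hi : ℝ, (∀ x ∈ K i, g x ∈ Set.Icc lo hi) ∧ hi - lo ≤ (1/M)^β := by
    intro i
    obtain ⟨xlo, hxlo, hmin⟩ := (hKco i).exists_isMinOn (hKne i) hg_cont.continuousOn
    obtain ⟨xhi, hxhi, hmax⟩ := (hKco i).exists_isMaxOn (hKne i) hg_cont.continuousOn
    refine ⟨g xlo, g xhi, fun x hx => ⟨hmin hx, hmax hx⟩, ?_⟩
    have h1 : |g xhi - g xlo| ≤ ‖xhi - xlo‖ ^ β :=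
      hg_hold _ _ (hKsub i hxhi) (hKsub i hxlo)
    have h2 : ‖xhi - xlo‖ ≤ 1/M := by
      rw [pi_norm_le_iff_of_nonneg (by positivity)]
      intro j
      rw [Pi.sub_apply, Real.norm_eq_abs, abs_le]
      have a1 := hxhi.1 j
      have a2 := hxhi.2 j
      have b1 := hxlo.1 j
      have b2 := hxlo.2 j
      simp only [Pi.add_apply] at a2 b2
      constructor <;> linarith
    calc g xhi - g xlo ≤ |g xhi - g xlo| := le_abs_self _
      _ ≤ ‖xhi - xlo‖ ^ β := h1
      _ ≤ (1/M) ^ β := Real.rpow_le_rpow (norm_nonneg _) h2 hβ0.le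
  choose lo hi hrange hwidth using hosc
  -- centered summands
  have hMd : (0:ℝ) < M^d := by positivity
  set c : (Fin d → Fin m) → ℝ := fun i => M^d * ∫ x in G i, g x with hc_def
  set Y : (Fin d → Fin m) → Ω → ℝ := fun i ω => (M^d)⁻¹ * (g (X i ω) - c i) with hYd
  have hYmeas : ∀ i, Measurable (Y i) := fun i =>
    ((hg_cont.measurable.comp (hmeas i)).sub_const (c i)).const_mul _
  have hYindep : iIndepFun Y μ := by
    have := hindep.comp (fun i => fun y => (M^d)⁻¹ * (g y - c i))
      (fun i => (hg_cont.measurable.sub_const (c i)).const_mul _)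
    exact this
  have hEg : ∀ i, ∫ ω, g (X i ω) ∂μ = c i := by
    intro i
    have h1 : ∫ ω, g (X i ω) ∂μ = ∫ y, g y ∂(Measure.map (X i) μ) :=
      (integral_map (hmeas i).aemeasurable hg_cont.aestronglyMeasurable).symm
    rw [h1, hlaw i, integral_smul_measure, hc_def]
    have h2 : ((m : ENNReal) ^ d).toReal = M ^ d := by
      rw [ENNReal.toReal_pow]
      simp [hM_def]
    rw [h2, smul_eq_mul]
  have hgX_int : ∀ i, Integrable (fun ω => g (X i ω)) μ := by
    intro i
    refine integrable_of_ae_Icc (a := lo i) (b := hi i)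
      (hg_cont.measurable.comp (hmeas i)).aestronglyMeasurable ?_
    filter_upwards [hmemG i] with ω hω
    exact hrange i _ (hGK i hω)
  have hEY : ∀ i, ∫ ω, Y i ω ∂μ = 0 := by
    intro i
    simp only [hYd]
    rw [integral_const_mul, integral_sub (hgX_int i) (integrable_const _), hEg i,
      integral_const]
    simp
  set A : (Fin d → Fin m) → ℝ := fun i => (M^d)⁻¹ * (lo i - c i) with hA_def
  set B : (Fin d → Fin m) → ℝ := fun i => (M^d)⁻¹ * (hi i - c i) with hB_def
  have hYrange : ∀ i, ∀ᵐ ω ∂μ, Y i ω ∈ Set.Icc (A i) (B i) := by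
    intro i
    filter_upwards [hmemG i] with ω hω
    have h1 := hrange i _ (hGK i hω)
    have hinv : (0:ℝ) ≤ (M^d)⁻¹ := by positivity
    exact ⟨mul_le_mul_of_nonneg_left (by linarith [h1.1]) hinv,
      mul_le_mul_of_nonneg_left (by linarith [h1.2]) hinv⟩
  set r : ℝ := (M^d)⁻¹ * (1/M)^β with hr_def
  have hr0 : 0 < r := by
    rw [hr_def]
    have : (0:ℝ) < (1/M)^β := Real.rpow_pos_of_pos (by positivity) _
    positivity
  have hBA : ∀ i, 0 ≤ B i - A i ∧ B i - A i ≤ r := by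
    intro i
    have h1 := hrange i (z i) (hzK i)
    have hlohi : lo i ≤ hi i := le_trans h1.1 h1.2
    have hinv : (0:ℝ) ≤ (M^d)⁻¹ := by positivity
    constructor
    · rw [hA_def, hB_def]
      have := mul_le_mul_of_nonneg_left (by linarith : lo i - c i ≤ hi i - c i) hinv
      linarith
    · rw [hA_def, hB_def, hr_def]
      have h2 : hi i - c i - (lo i - c i) ≤ (1/M)^β := by linarith [hwidth i]
      calc (M^d)⁻¹ * (hi i - c i) - (M^d)⁻¹ * (lo i - c i)
          = (M^d)⁻¹ * (hi i - c i - (lo i - c i)) := by ring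
        _ ≤ (M^d)⁻¹ * (1/M)^β := mul_le_mul_of_nonneg_left h2 hinv
  have hmgfY : ∀ i t, mgf (Y i) μ t ≤ exp (t^2 * r^2 / 8) := by
    intro i t
    refine (hoeffding_lemma' μ (hYmeas i).aestronglyMeasurable (hYrange i) (hEY i) t).trans ?_
    rw [exp_le_exp]
    have h1 := hBA i
    have h2 : (B i - A i)^2 ≤ r^2 := by nlinarith [h1.1, h1.2]
    nlinarith [sq_nonneg t]
  -- Chernoff bound
  set Z : Ω → ℝ := ∑ i : Fin d → Fin m, Y i with hZ_def
  set sexp : ℝ := (d:ℝ) + 2*β with hs_def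
  have hMs : (0:ℝ) < M ^ sexp := Real.rpow_pos_of_pos hM0 _
  set t₀ : ℝ := 4 * ε * M ^ sexp with ht₀_def
  have ht₀0 : 0 ≤ t₀ := by positivity
  have hexpint : ∀ t : ℝ, Integrable (fun ω => exp (t * Z ω)) μ := by
    intro t
    exact hYindep.integrable_exp_mul_sum hYmeas
      (fun i _ => integrable_exp_mul_of_ae_Icc (a := A i) (b := B i)
        (hYmeas i).aestronglyMeasurable (hYrange i))
  have hcard : ((Fintype.card (Fin d → Fin m)) : ℝ) = M ^ d := by
    rw [Fintype.card_fun]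
    simp [hM_def]
  have hP : (0:ℝ) < M ^ β := Real.rpow_pos_of_pos hM0 _
  have hkey : ((Fintype.card (Fin d → Fin m)) : ℝ) * r^2 = (M ^ sexp)⁻¹ := by
    rw [hcard, hr_def]
    have e1 : (1/M)^β = (M^β)⁻¹ := by rw [one_div, Real.inv_rpow hM0.le]
    have e2 : M ^ sexp = M^d * (M^β * M^β) := by
      rw [hs_def, Real.rpow_add hM0, two_mul, Real.rpow_add hM0, Real.rpow_natCast]
    rw [e1, e2]
    field_simp
  have hmgfZ : ∀ t : ℝ, mgf Z μ t = ∏ i, mgf (Y i) μ t :=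
    fun t => hYindep.mgf_sum hYmeas Finset.univ
  have hbound : ∀ t u : ℝ, exp u * mgf Z μ t ≤
      exp (u + ((Fintype.card (Fin d → Fin m)):ℝ) * (t^2*r^2/8)) := by
    intro t u
    rw [Real.exp_add, hmgfZ t]
    refine mul_le_mul_of_nonneg_left ?_ (exp_pos _).le
    calc ∏ i, mgf (Y i) μ t ≤ ∏ _i : Fin d → Fin m, exp (t^2*r^2/8) :=
        Finset.prod_le_prod (fun i _ => mgf_nonneg) (fun i _ => hmgfY i t)
      _ = exp (t^2*r^2/8) ^ (Fintype.card (Fin d → Fin m)) := by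
          rw [Finset.prod_const, Finset.card_univ]
      _ = exp (((Fintype.card (Fin d → Fin m)):ℝ) * (t^2*r^2/8)) := by
          rw [← Real.exp_nat_mul]
  have hexp_eq : ∀ t : ℝ, t^2 = t₀^2 →
      -t₀*ε + ((Fintype.card (Fin d → Fin m)):ℝ) * (t^2*r^2/8) = -2*M^sexp*ε^2 := by
    intro t ht
    have h1 : ((Fintype.card (Fin d → Fin m)):ℝ) * (t^2*r^2/8) =
        (((Fintype.card (Fin d → Fin m)):ℝ) * r^2) * t₀^2/8 := by rw [ht]; ring
    rw [h1, hkey, ht₀_def]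
    field_simp
    ring
  have hup : μ {ω | ε ≤ Z ω} ≤ ENNReal.ofReal (exp (-2*M^sexp*ε^2)) := by
    rw [ENNReal.le_ofReal_iff_toReal_le (measure_ne_top μ _) (exp_pos _).le]
    refine (measure_ge_le_exp_mul_mgf ε ht₀0 (hexpint t₀)).trans ?_
    refine (hbound t₀ (-t₀*ε)).trans ?_
    rw [hexp_eq t₀ rfl]
  have hlow : μ {ω | Z ω ≤ -ε} ≤ ENNReal.ofReal (exp (-2*M^sexp*ε^2)) := by
    rw [ENNReal.le_ofReal_iff_toReal_le (measure_ne_top μ _) (exp_pos _).le]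
    have h := measure_le_le_exp_mul_mgf (μ := μ) (X := Z) (t := -t₀) (-ε)
      (neg_nonpos.2 ht₀0) (hexpint (-t₀))
    refine h.trans ?_
    have h2 : -(-t₀) * (-ε) = -t₀ * ε := by ring
    rw [h2]
    refine (hbound (-t₀) (-t₀*ε)).trans ?_
    rw [hexp_eq (-t₀) (by ring)]
  -- final assembly
  have hSigmaC : (M^d)⁻¹ * ∑ i : Fin d → Fin m, c i = ∫ x in Set.Icc (0:Fin d→ℝ) 1, g x := by
    simp only [hc_def]
    rw [← Finset.mul_sum, inv_mul_cancel_left₀ hMd.ne', ← hsplit]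
  have hIf : ∫ x in Set.Icc (0:Fin d→ℝ) 1, f x = ∫ x in Set.Icc (0:Fin d→ℝ) 1, g x :=
    setIntegral_congr_fun measurableSet_Icc (fun x hx => (hg_eq x hx).symm)
  have hGnull : ∀ i, μ {ω | X i ω ∉ G i} = 0 := by
    intro i
    have := hmemG i
    rwa [ae_iff] at this
  have hEsub : {ω | |(M^d)⁻¹ * ∑ i : Fin d → Fin m, f (X i ω) -
      ∫ x in Set.Icc (0:Fin d→ℝ) 1, f x| > ε} ⊆
      ({ω | ε ≤ Z ω} ∪ {ω | Z ω ≤ -ε}) ∪ ⋃ i, {ω | X i ω ∉ G i} := by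
    intro ω hω
    by_cases hgood : ∀ i, X i ω ∈ G i
    · left
      have hfg : ∀ i : Fin d → Fin m, f (X i ω) = g (X i ω) :=
        fun i => (hg_eq _ (hGsub i (hgood i))).symm
      have hZω : Z ω = (M^d)⁻¹ * ∑ i : Fin d → Fin m, f (X i ω) -
          ∫ x in Set.Icc (0:Fin d→ℝ) 1, f x := by
        have hsum_eq : ∑ i : Fin d → Fin m, f (X i ω) = ∑ i : Fin d → Fin m, g (X i ω) :=
          Finset.sum_congr rfl fun i _ => hfg i
        simp only [hZ_def, Finset.sum_apply, hYd]
        rw [← Finset.mul_sum, Finset.sum_sub_distrib, mul_sub, hIf, ← hSigmaC, hsum_eq]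
      rw [Set.mem_setOf_eq, ← hZω] at hω
      rcases le_or_gt 0 (Z ω) with h | h
      · left
        rw [Set.mem_setOf_eq]
        rw [abs_of_nonneg h] at hω
        linarith
      · right
        rw [Set.mem_setOf_eq]
        rw [abs_of_neg h] at hω
        linarith
    · right
      push_neg at hgood
      obtain ⟨i, hi⟩ := hgood
      exact Set.mem_iUnion.2 ⟨i, hi⟩
  calc μ {ω | |(M^d)⁻¹ * ∑ i : Fin d → Fin m, f (X i ω) -
        ∫ x in Set.Icc (0:Fin d→ℝ) 1, f x| > ε}
      ≤ μ (({ω | ε ≤ Z ω} ∪ {ω | Z ω ≤ -ε}) ∪ ⋃ i, {ω | X i ω ∉ G i}) := measure_mono hEsub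
    _ ≤ μ ({ω | ε ≤ Z ω} ∪ {ω | Z ω ≤ -ε}) + μ (⋃ i, {ω | X i ω ∉ G i}) := measure_union_le _ _
    _ = μ ({ω | ε ≤ Z ω} ∪ {ω | Z ω ≤ -ε}) := by
        rw [measure_iUnion_null hGnull, add_zero]
    _ ≤ μ {ω | ε ≤ Z ω} + μ {ω | Z ω ≤ -ε} := measure_union_le _ _
    _ ≤ ENNReal.ofReal (exp (-2*M^sexp*ε^2)) + ENNReal.ofReal (exp (-2*M^sexp*ε^2)) :=
        add_le_add hup hlow
    _ = ENNReal.ofReal (2 * exp (-2*M^sexp*ε^2)) := by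
        rw [← ENNReal.ofReal_add (exp_pos _).le (exp_pos _).le]
        ring_nf
    _ = ENNReal.ofReal (2 * exp (-2 * M ^ ((d:ℝ) + 2*β) * ε^2)) := by rw [← hs_def]
end

section
/- Let n ∈ ℕ with n ≥ 1, let u ∈ [1 − 1/(4n), 1] and v ∈ [1/2, 3/4], and let m ∈ ℤ be such that the point x := (m + v)/(u·n) lies in [0,1]. Then 0 ≤ m ≤ n−1 and x ∈ [ (2m+1)/(2n), (m+1)/n ]. In particular, every such point x lies in the union ∪_{k=0}^{n−1} [ (2k+1)/(2n), (k+1)/n ]. -/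
/-- Nodes of the one-dimensional dilated and shifted rectangle rule with
dilation `u ∈ [1 - 1/(4n), 1]` and shift `v ∈ [1/2, 3/4]`: every node
`x = (m+v)/(un)` lying in `[0,1]` has `0 ≤ m ≤ n-1` and
`x ∈ [(2m+1)/(2n), (m+1)/n]`. -/
theorem frolov_nodes_avoid_bumps (n : ℕ) (hn : 1 ≤ n) (u v : ℝ)
    (hu : u ∈ Set.Icc (1 - 1 / (4 * (n : ℝ))) 1) (hv : v ∈ Set.Icc (1 / 2 : ℝ) (3 / 4))
    (m : ℤ) (hx : ((m : ℝ) + v) / (u * n) ∈ Set.Icc (0 : ℝ) 1) :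
    0 ≤ m ∧ m ≤ (n : ℤ) - 1 ∧
      ((m : ℝ) + v) / (u * n) ∈
        Set.Icc ((2 * (m : ℝ) + 1) / (2 * n)) (((m : ℝ) + 1) / n) := by
  obtain ⟨hu1, hu2⟩ := hu
  obtain ⟨hv1, hv2⟩ := hv
  obtain ⟨hx1, hx2⟩ := hx
  have hn' : (1:ℝ) ≤ n := by exact_mod_cast hn
  have hnp : (0:ℝ) < n := by linarith
  have h4 : (0:ℝ) < 4 * n := by linarith
  have hq : 1 / (4 * (n:ℝ)) ≤ 1 / 4 := by
    rw [div_le_div_iff₀ h4 (by norm_num)]; linarith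
  have hup : (0:ℝ) < u := by linarith
  have hun : (0:ℝ) < u * n := mul_pos hup hnp
  have h4nu : 4 * (n:ℝ) - 1 ≤ 4 * n * u := by
    have h := mul_le_mul_of_nonneg_left hu1 (le_of_lt h4)
    have he : (4*(n:ℝ)) * (1 - 1/(4*n)) = 4*n - 1 := by field_simp
    linarith [he ▸ h]
  have hmv : 0 ≤ (m:ℝ) + v := by
    by_contra h
    push_neg at h
    have := div_neg_of_neg_of_pos h hun
    linarith
  have hm0 : 0 ≤ m := by
    have h1 : (-1:ℝ) < (m:ℝ) := by linarith
    have : (-1:ℤ) < m := by exact_mod_cast h1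
    omega
  have hm0' : (0:ℝ) ≤ (m:ℝ) := by exact_mod_cast hm0
  have hmub : (m:ℝ) + v ≤ u * n := (div_le_one hun).mp hx2
  have hmn : (m:ℝ) < n := by nlinarith
  have hmn' : m < (n:ℤ) := by exact_mod_cast hmn
  have hmle : m ≤ (n:ℤ) - 1 := by omega
  have hmler : (m:ℝ) ≤ (n:ℝ) - 1 := by
    have h2 : (m:ℝ) ≤ ((n:ℤ):ℝ) - 1 := by exact_mod_cast hmle
    simpa using h2
  refine ⟨hm0, hmle, ?_, ?_⟩
  · rw [div_le_div_iff₀ (by linarith) hun]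
    nlinarith [mul_le_mul_of_nonneg_right
        (mul_le_mul_of_nonneg_left hu2 (by linarith : (0:ℝ) ≤ 2*(m:ℝ)+1)) hnp.le,
      mul_nonneg hnp.le (by linarith : (0:ℝ) ≤ 2*v - 1)]
  · rw [div_le_div_iff₀ hun hnp]
    nlinarith [mul_nonneg (mul_nonneg hm0' (le_of_lt hnp)) (sub_nonneg.mpr hu1),
      mul_le_mul_of_nonneg_left h4nu hm0', mul_pos hnp hnp]
end
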